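/- arXiv:0911.2292 — 5 statements merged into one kernel-verified Lean document; each statement's English description precedes it below -/
import Mathlib

section
/- Every rich MSTD set is an MSTD set. That is, if S ⊆ [0,n] is a rich MSTD set with MSTD fringe pair (A, B; k), then |S+S| > |S−S|. -/
open Finset Filter Pointwise
open scoped Classical

/-- `n - S = {n - s : s ∈ S}`. -/
def mirror (n : ℕ) (S : Finset ℤ) : Finset ℤ := S.image (fun s => (n : ℤ) - s)

/-- Probability that a uniformly random subset of `[0,n]` satisfies `P`. -/
noncomputable def prAll (n : ℕ) (P : Finset ℤ → Prop) : ℝ :=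
  (((Finset.Icc (0:ℤ) n).powerset.filter P).card : ℝ) / 2 ^ (n + 1)

/-- Probability w.r.t. the uniform distribution on subsets of `[0,n]` containing `0` and `n`. -/
noncomputable def pr0n (n : ℕ) (P : Finset ℤ → Prop) : ℝ :=
  (((Finset.Icc (0:ℤ) n).powerset.filter
      (fun S => (0:ℤ) ∈ S ∧ (n:ℤ) ∈ S ∧ P S)).card : ℝ) / 2 ^ (n - 1)

/-- A finite set of integers is MSTD if it has more sums than differences. -/
def IsMSTD (S : Finset ℤ) : Prop := (S - S).card < (S + S).card

/-- Probability that a uniformly random subset of `[0,n]` is MSTD. -/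
noncomputable def rhoN (n : ℕ) : ℝ := prAll n IsMSTD

/-- The pair (number of missing sums, number of missing differences) of `S ⊆ [0,n]`. -/
def lam (n : ℕ) (S : Finset ℤ) : ℕ × ℕ :=
  (2 * n + 1 - (S + S).card, 2 * n + 1 - (S - S).card)

/-- Probability that a uniformly random subset of `[0,n]` satisfies `lam n S ∈ Λ`. -/
noncomputable def rhoL (Λ : Set (ℕ × ℕ)) (n : ℕ) : ℝ := prAll n (fun S => lam n S ∈ Λ)

/-- An MSTD fringe pair of order `k`. -/
def IsFringePair (A B : Finset ℤ) (k : ℕ) : Prop :=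
  A ⊆ Finset.Icc (0:ℤ) k ∧ B ⊆ Finset.Icc (0:ℤ) k ∧ (0:ℤ) ∈ A ∧ (0:ℤ) ∈ B ∧
    2 * ((A + B) ∩ Finset.Icc (0:ℤ) k).card <
      ((A + A) ∩ Finset.Icc (0:ℤ) k).card + ((B + B) ∩ Finset.Icc (0:ℤ) k).card

/-- `S ⊆ [0,n]` is a rich MSTD set with MSTD fringe pair `(A, B; k)`. -/
def IsRichWith (n : ℕ) (S A B : Finset ℤ) (k : ℕ) : Prop :=
  IsFringePair A B k ∧ 2 * k < n ∧ S ∩ Finset.Icc (0:ℤ) k = A ∧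
    mirror n S ∩ Finset.Icc (0:ℤ) k = B ∧
    Finset.Icc ((k:ℤ) + 1) (2 * n - k - 1) ⊆ S + S

/-- The strict partial order on MSTD fringe pairs: `(A', B'; k') < (A, B; k)`. -/
def FringeLt (A' B' : Finset ℤ) (k' : ℕ) (A B : Finset ℤ) (k : ℕ) : Prop :=
  IsFringePair A' B' k' ∧ IsFringePair A B k ∧ k' < k ∧
    A' = A ∩ Finset.Icc (0:ℤ) k' ∧ B' = B ∩ Finset.Icc (0:ℤ) k' ∧
    Finset.Icc ((k':ℤ) + 1) k ⊆ A + A ∧ Finset.Icc ((k':ℤ) + 1) k ⊆ B + B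

/-- A minimal MSTD fringe pair. -/
def MinimalFringePair (A B : Finset ℤ) (k : ℕ) : Prop :=
  IsFringePair A B k ∧ ¬ ∃ A' B' k', FringeLt A' B' k' A B k

/-- `σ_n(A; k)`: probability that a uniform random `T ⊆ [0,n]` is `k`-semi-rich with
prefix `(A; k)`. -/
noncomputable def sigmaN (A : Finset ℤ) (k n : ℕ) : ℝ :=
  (((Finset.Icc (0:ℤ) n).powerset.filter
      (fun T => T ∩ Finset.Icc (0:ℤ) k = A ∧ Finset.Icc ((k:ℤ) + 1) n ⊆ T + T)).card : ℝ) / 2 ^ n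

/-- `ρ_n(A, B; k) = 2^{-n+1} · #{S ⊆ [0,n] : S ∩ [0,k] = A, (n−S) ∩ [0,k] = B,
[k+1, 2n−k−1] ⊆ S+S}`. -/
noncomputable def rhoABn (A B : Finset ℤ) (k n : ℕ) : ℝ :=
  2 * (((Finset.Icc (0:ℤ) n).powerset.filter
      (fun S => S ∩ Finset.Icc (0:ℤ) k = A ∧ mirror n S ∩ Finset.Icc (0:ℤ) k = B ∧
        Finset.Icc ((k:ℤ) + 1) (2 * n - k - 1) ⊆ S + S)).card : ℝ) / 2 ^ n

/-- `ρ_{*n} = 2^{-n+1} · #{S ⊆ [0,n] : 0, n ∈ S and S is MSTD}`. -/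
noncomputable def rhoStarN (n : ℕ) : ℝ :=
  2 * (((Finset.Icc (0:ℤ) n).powerset.filter
      (fun S => (0:ℤ) ∈ S ∧ (n:ℤ) ∈ S ∧ IsMSTD S)).card : ℝ) / 2 ^ n

/-- `G_j(A; k) = #{T ⊆ [0,j] : T ∩ [0,k] = A, [k+1,j−1] ⊆ T+T, j ∉ T+T}`. -/
noncomputable def G (A : Finset ℤ) (k j : ℕ) : ℕ :=
  ((Finset.Icc (0:ℤ) j).powerset.filter
      (fun T => T ∩ Finset.Icc (0:ℤ) k = A ∧
        Finset.Icc ((k:ℤ) + 1) ((j:ℤ) - 1) ⊆ T + T ∧ (j:ℤ) ∉ T + T)).card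

/-- `S ⊆ [0,n]` is `k`-affluent. -/
def Affluent (n k : ℕ) (S : Finset ℤ) : Prop :=
  Finset.Icc ((k:ℤ) + 1) (2 * n - k - 1) ⊆ S + S ∧
    Finset.Icc (-(n:ℤ) + k + 1) ((n:ℤ) - k - 1) ⊆ S - S

/-- `μ_n(A, B; k)`: probability that a uniform random `S ⊆ [0,n]` is `k`-affluent
with fringe pair `(A, B; k)`. -/
noncomputable def muN (A B : Finset ℤ) (k n : ℕ) : ℝ :=
  prAll n (fun S => S ∩ Finset.Icc (0:ℤ) k = A ∧ mirror n S ∩ Finset.Icc (0:ℤ) k = B ∧ Affluent n k S)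

/-- The strict partial order on general fringe pairs. -/
def GFringeLt (A' B' : Finset ℤ) (k' : ℕ) (A B : Finset ℤ) (k : ℕ) : Prop :=
  A' ⊆ Finset.Icc (0:ℤ) k' ∧ B' ⊆ Finset.Icc (0:ℤ) k' ∧ A ⊆ Finset.Icc (0:ℤ) k ∧ B ⊆ Finset.Icc (0:ℤ) k ∧
    k' < k ∧ A' = A ∩ Finset.Icc (0:ℤ) k' ∧ B' = B ∩ Finset.Icc (0:ℤ) k' ∧
    Finset.Icc ((k':ℤ) + 1) k ⊆ A + A ∧ Finset.Icc ((k':ℤ) + 1) k ⊆ B + B ∧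
    Finset.Icc ((k':ℤ) + 1) k ⊆ A + B

/-- A minimal general fringe pair. -/
def GMinimal (A B : Finset ℤ) (k : ℕ) : Prop :=
  A ⊆ Finset.Icc (0:ℤ) k ∧ B ⊆ Finset.Icc (0:ℤ) k ∧ ¬ ∃ A' B' k', GFringeLt A' B' k' A B k

/-- `λ(A, B; k)` for a general fringe pair. -/
noncomputable def lamPair (A B : Finset ℤ) (k : ℕ) : ℕ × ℕ :=
  (2 * (k + 1) - ((A + A) ∩ Finset.Icc (0:ℤ) k).card - ((B + B) ∩ Finset.Icc (0:ℤ) k).card,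
   2 * (k + 1 - ((A + B) ∩ Finset.Icc (0:ℤ) k).card))

/-- every rich MSTD set is an MSTD set. -/
theorem rich_mstd_is_mstd (n : ℕ) (S A B : Finset ℤ) (k : ℕ)
    (hS : S ⊆ Finset.Icc 0 (n:ℤ)) (h : IsRichWith n S A B k) :
    IsMSTD S := by
  obtain ⟨⟨hA, hB, h0A, h0B, hlt⟩, hkn, hSA, hSB, hmid⟩ := h
  have hAS : A ⊆ S := hSA ▸ Finset.inter_subset_left
  have hmemS : ∀ s ∈ S, (0:ℤ) ≤ s ∧ s ≤ n := by
    intro s hs; have := hS hs; rw [Finset.mem_Icc] at this; exact this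
  have hmemA : ∀ x, x ∈ A ↔ x ∈ S ∧ 0 ≤ x ∧ x ≤ (k:ℤ) := by
    intro x; rw [← hSA, Finset.mem_inter, Finset.mem_Icc]
  have hmemB : ∀ x, x ∈ B ↔ (∃ s ∈ S, (n:ℤ) - s = x) ∧ 0 ≤ x ∧ x ≤ (k:ℤ) := by
    intro x
    rw [← hSB, Finset.mem_inter, Finset.mem_Icc, mirror, Finset.mem_image]
  set P := (A + A) ∩ Finset.Icc (0:ℤ) k with hP
  set Q := (B + B) ∩ Finset.Icc (0:ℤ) k with hQ
  set R := (A + B) ∩ Finset.Icc (0:ℤ) k with hR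
  set I1 := Finset.Icc ((k:ℤ) + 1) (2 * n - k - 1) with hI1
  set I2 := Finset.Icc (-(n:ℤ) + k + 1) ((n:ℤ) - k - 1) with hI2
  have hc : I1.card = I2.card := by
    rw [hI1, hI2, Int.card_Icc, Int.card_Icc]; congr 1; ring
  have hinj : Function.Injective (fun x : ℤ => 2 * (n:ℤ) - x) := by
    intro x y hxy; dsimp at hxy; omega
  -- lower bound for |S+S|
  have hPS : P ⊆ S + S :=
    hP ▸ (Finset.inter_subset_left.trans (Finset.add_subset_add hAS hAS))
  have hQim : Q.image (fun x => 2 * (n:ℤ) - x) ⊆ S + S := by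
    intro y hy
    simp only [Finset.mem_image] at hy
    obtain ⟨x, hx, rfl⟩ := hy
    obtain ⟨hx1, _⟩ := Finset.mem_inter.1 hx
    rw [Finset.mem_add] at hx1
    obtain ⟨b1, hb1, b2, hb2, rfl⟩ := hx1
    obtain ⟨⟨s1, hs1, rfl⟩, _⟩ := (hmemB b1).1 hb1
    obtain ⟨⟨s2, hs2, rfl⟩, _⟩ := (hmemB b2).1 hb2
    rw [Finset.mem_add]
    exact ⟨s1, hs1, s2, hs2, by ring⟩
  have hsub : P ∪ I1 ∪ Q.image (fun x => 2 * (n:ℤ) - x) ⊆ S + S :=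
    Finset.union_subset (Finset.union_subset hPS hmid) hQim
  have hd1 : Disjoint P I1 := by
    rw [Finset.disjoint_left]; intro a ha hb
    have h1 := (Finset.mem_inter.1 ha).2
    rw [Finset.mem_Icc] at h1
    rw [hI1, Finset.mem_Icc] at hb
    omega
  have hd2 : Disjoint (P ∪ I1) (Q.image (fun x => 2 * (n:ℤ) - x)) := by
    rw [Finset.disjoint_left]; intro a ha hb
    simp only [Finset.mem_image] at hb
    obtain ⟨x, hx, rfl⟩ := hb
    have hx' := (Finset.mem_inter.1 hx).2
    rw [Finset.mem_Icc] at hx'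
    rcases Finset.mem_union.1 ha with h1 | h1
    · have h2 := (Finset.mem_inter.1 h1).2
      rw [Finset.mem_Icc] at h2
      omega
    · rw [hI1, Finset.mem_Icc] at h1
      omega
  have hcard1 : P.card + I1.card + Q.card ≤ (S + S).card := by
    have hle := Finset.card_le_card hsub
    rwa [Finset.card_union_of_disjoint hd2, Finset.card_union_of_disjoint hd1,
      Finset.card_image_of_injective _ hinj] at hle
  -- upper bound for |S-S|
  have hsub2 : S - S ⊆ R.image (fun x => (n:ℤ) - x) ∪ I2 ∪ R.image (fun x => x - (n:ℤ)) := by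
    intro d hd
    rw [Finset.mem_sub] at hd
    obtain ⟨s, hs, t, ht, rfl⟩ := hd
    obtain ⟨hs0, hsn⟩ := hmemS s hs
    obtain ⟨ht0, htn⟩ := hmemS t ht
    by_cases h1 : (n:ℤ) - k ≤ s - t
    · apply Finset.mem_union_left; apply Finset.mem_union_left
      rw [Finset.mem_image]
      refine ⟨t + ((n:ℤ) - s), ?_, by ring⟩
      rw [hR, Finset.mem_inter, Finset.mem_Icc]
      refine ⟨?_, by omega, by omega⟩
      rw [Finset.mem_add]
      refine ⟨t, ?_, (n:ℤ) - s, ?_, rfl⟩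
      · rw [hmemA]; exact ⟨ht, ht0, by omega⟩
      · rw [hmemB]; exact ⟨⟨s, hs, rfl⟩, by omega, by omega⟩
    · by_cases h2 : s - t ≤ (k:ℤ) - n
      · apply Finset.mem_union_right
        rw [Finset.mem_image]
        refine ⟨s + ((n:ℤ) - t), ?_, by ring⟩
        rw [hR, Finset.mem_inter, Finset.mem_Icc]
        refine ⟨?_, by omega, by omega⟩
        rw [Finset.mem_add]
        refine ⟨s, ?_, (n:ℤ) - t, ?_, rfl⟩
        · rw [hmemA]; exact ⟨hs, hs0, by omega⟩
        · rw [hmemB]; exact ⟨⟨t, ht, rfl⟩, by omega, by omega⟩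
      · apply Finset.mem_union_left; apply Finset.mem_union_right
        rw [hI2, Finset.mem_Icc]; omega
  have hcard2 : (S - S).card ≤ R.card + I2.card + R.card := by
    have h1 := Finset.card_le_card hsub2
    have h2 := Finset.card_union_le (R.image (fun x => (n:ℤ) - x) ∪ I2)
      (R.image (fun x => x - (n:ℤ)))
    have h3 := Finset.card_union_le (R.image (fun x => (n:ℤ) - x)) I2
    have h4 := Finset.card_image_le (s := R) (f := fun x => (n:ℤ) - x)
    have h5 := Finset.card_image_le (s := R) (f := fun x => x - (n:ℤ))
    omega
  unfold IsMSTD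
  omega
end

section
/- Let S ⊆ [0,n] be a rich MSTD set, and let (A, B; k) and (A', B'; k') be two MSTD fringe pairs of S. If k = k', then (A, B; k) = (A', B'; k'). If k > k', then (A, B; k) > (A', B'; k') in the partial order on MSTD fringe pairs, i.e., A' = A ∩ [0,k'], B' = B ∩ [0,k'], [k'+1, k] ⊆ A+A, and [k'+1, k] ⊆ B+B. -/
open Finset Filter Pointwise
open scoped Classical

/-- the MSTD fringe pairs of a rich MSTD set form a chain. -/
theorem fringe_pairs_chain (n : ℕ) (S A B A' B' : Finset ℤ) (k k' : ℕ)
    (hS : S ⊆ Finset.Icc 0 (n:ℤ))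
    (h : IsRichWith n S A B k) (h' : IsRichWith n S A' B' k') :
    (k = k' → A = A' ∧ B = B') ∧ (k' < k → FringeLt A' B' k' A B k) := by
  obtain ⟨hfp, hkn, hA, hB, hSS⟩ := h
  obtain ⟨hfp', hkn', hA', hB', hSS'⟩ := h'
  have hSn : ∀ s ∈ S, (0:ℤ) ≤ s ∧ s ≤ n := by
    intro s hs
    have := hS hs
    simpa [Finset.mem_Icc] using this
  constructor
  · rintro rfl
    exact ⟨hA.symm.trans hA', hB.symm.trans hB'⟩
  · intro hlt
    have hkk' : (k':ℤ) ≤ k := by exact_mod_cast hlt.le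
    refine ⟨hfp', hfp, hlt, ?_, ?_, ?_, ?_⟩
    · rw [← hA', ← hA, Finset.inter_assoc]
      congr 1
      ext y; simp only [Finset.mem_inter, Finset.mem_Icc]; omega
    · rw [← hB', ← hB, Finset.inter_assoc]
      congr 1
      ext y; simp only [Finset.mem_inter, Finset.mem_Icc]; omega
    · -- [k'+1, k] ⊆ A + A
      intro x hx
      rw [Finset.mem_Icc] at hx
      have hxS : x ∈ S + S := by
        apply hSS'
        rw [Finset.mem_Icc]
        omega
      rw [Finset.mem_add] at hxS ⊢
      obtain ⟨s, hs, t, ht, hst⟩ := hxS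
      have hs' := hSn s hs
      have ht' := hSn t ht
      refine ⟨s, ?_, t, ?_, hst⟩
      · rw [← hA, Finset.mem_inter, Finset.mem_Icc]; exact ⟨hs, hs'.1, by omega⟩
      · rw [← hA, Finset.mem_inter, Finset.mem_Icc]; exact ⟨ht, ht'.1, by omega⟩
    · -- [k'+1, k] ⊆ B + B
      intro x hx
      rw [Finset.mem_Icc] at hx
      have hxS : (2 * (n:ℤ) - x) ∈ S + S := by
        apply hSS'
        rw [Finset.mem_Icc]
        omega
      rw [Finset.mem_add] at hxS
      obtain ⟨s, hs, t, ht, hst⟩ := hxS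
      have hs' := hSn s hs
      have ht' := hSn t ht
      rw [Finset.mem_add]
      refine ⟨(n:ℤ) - s, ?_, (n:ℤ) - t, ?_, by omega⟩
      · rw [← hB, Finset.mem_inter, Finset.mem_Icc]
        exact ⟨Finset.mem_image_of_mem _ hs, by omega, by omega⟩
      · rw [← hB, Finset.mem_inter, Finset.mem_Icc]
        exact ⟨Finset.mem_image_of_mem _ ht, by omega, by omega⟩
end

section
/- Let S ⊆ [0,n] be a rich MSTD set and let (A, B; k) be the MSTD fringe pair of S of smallest order. Then (A, B; k) is a minimal element in the partial order on all MSTD fringe pairs. Moreover, for every k' with k < k' < n/2, the pair (A', B'; k') with A' = S ∩ [0,k'] and B' = (n − S) ∩ [0,k'] is also an MSTD fringe pair of S, and every MSTD fringe pair of S has this form. -/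
open Finset Filter Pointwise
open scoped Classical

lemma tri_split (T : Finset ℤ) (a b c d : ℤ) (hT : T ⊆ Finset.Icc a d) (hbc : b ≤ c) :
    T.card = (T ∩ Finset.Icc a b).card + (T ∩ Finset.Icc (b+1) c).card
      + (T ∩ Finset.Icc (c+1) d).card := by
  classical
  have hu : T = (T ∩ Finset.Icc a b) ∪ ((T ∩ Finset.Icc (b+1) c) ∪ (T ∩ Finset.Icc (c+1) d)) := by
    ext x
    simp only [Finset.mem_union, Finset.mem_inter, Finset.mem_Icc]
    constructor
    · intro hx
      have h := hT hx
      simp only [Finset.mem_Icc] at h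
      rcases le_or_gt x b with h1 | h1
      · exact Or.inl ⟨hx, h.1, h1⟩
      rcases le_or_gt x c with h2 | h2
      · exact Or.inr (Or.inl ⟨hx, by omega, h2⟩)
      · exact Or.inr (Or.inr ⟨hx, by omega, h.2⟩)
    · rintro (⟨h,-⟩|⟨h,-⟩|⟨h,-⟩) <;> exact h
  have d2 : Disjoint (T ∩ Finset.Icc (b+1) c) (T ∩ Finset.Icc (c+1) d) := by
    simp only [Finset.disjoint_left, Finset.mem_inter, Finset.mem_Icc]
    rintro x ⟨-, h1, h2⟩ ⟨-, h3, h4⟩; omega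
  have d1 : Disjoint (T ∩ Finset.Icc a b) ((T ∩ Finset.Icc (b+1) c) ∪ (T ∩ Finset.Icc (c+1) d)) := by
    simp only [Finset.disjoint_left, Finset.mem_union, Finset.mem_inter, Finset.mem_Icc]
    rintro x ⟨-, h1, h2⟩ (⟨-, h3, h4⟩|⟨-, h3, h4⟩) <;> omega
  conv_lhs => rw [hu]
  rw [Finset.card_union_of_disjoint d1, Finset.card_union_of_disjoint d2]
  omega

lemma sum_inter_low (X Y : Finset ℤ) (k : ℤ) (hX : ∀ x ∈ X, 0 ≤ x) (hY : ∀ y ∈ Y, 0 ≤ y) :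
    (X + Y) ∩ Finset.Icc 0 k = ((X ∩ Finset.Icc 0 k) + (Y ∩ Finset.Icc 0 k)) ∩ Finset.Icc 0 k := by
  ext z
  simp only [Finset.mem_inter, Finset.mem_add, Finset.mem_Icc]
  constructor
  · rintro ⟨⟨x, hx, y, hy, rfl⟩, h0, hk⟩
    have h1 := hX x hx; have h2 := hY y hy
    exact ⟨⟨x, ⟨hx, by omega⟩, y, ⟨hy, by omega⟩, rfl⟩, h0, hk⟩
  · rintro ⟨⟨x, ⟨hx,-⟩, y, ⟨hy,-⟩, rfl⟩, h⟩
    exact ⟨⟨x, hx, y, hy, rfl⟩, h⟩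

lemma image_sub_inter (U : Finset ℤ) (c a b : ℤ) :
    (U.image (fun x => c - x)) ∩ Finset.Icc a b = (U ∩ Finset.Icc (c-b) (c-a)).image (fun x => c - x) := by
  ext z
  simp only [Finset.mem_inter, Finset.mem_image, Finset.mem_Icc]
  constructor
  · rintro ⟨⟨x, hx, rfl⟩, h1, h2⟩
    exact ⟨x, ⟨hx, by omega⟩, rfl⟩
  · rintro ⟨x, ⟨hx, h1, h2⟩, rfl⟩
    exact ⟨⟨x, hx, rfl⟩, by omega⟩

lemma card_image_sub_inter (U : Finset ℤ) (c a b : ℤ) :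
    ((U.image (fun x => c - x)) ∩ Finset.Icc a b).card = (U ∩ Finset.Icc (c-b) (c-a)).card := by
  rw [image_sub_inter, Finset.card_image_of_injective _ (fun x y h => by omega)]

lemma mirror_add_mirror (n : ℕ) (S : Finset ℤ) :
    mirror n S + mirror n S = (S + S).image (fun x => 2*(n:ℤ) - x) := by
  ext z
  simp only [mirror, Finset.mem_add, Finset.mem_image]
  constructor
  · rintro ⟨a, ⟨s, hs, rfl⟩, b, ⟨t, ht, rfl⟩, rfl⟩
    exact ⟨s + t, ⟨s, hs, t, ht, rfl⟩, by ring⟩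
  · rintro ⟨x, ⟨s, hs, t, ht, rfl⟩, rfl⟩
    exact ⟨(n:ℤ) - s, ⟨s, hs, rfl⟩, (n:ℤ) - t, ⟨t, ht, rfl⟩, by ring⟩

lemma mirror_add_self (n : ℕ) (S : Finset ℤ) :
    mirror n S + S = (S - S).image (fun x => (n:ℤ) - x) := by
  ext z
  simp only [mirror, Finset.mem_add, Finset.mem_sub, Finset.mem_image]
  constructor
  · rintro ⟨a, ⟨s, hs, rfl⟩, t, ht, rfl⟩
    exact ⟨s - t, ⟨s, hs, t, ht, rfl⟩, by ring⟩
  · rintro ⟨x, ⟨s, hs, t, ht, rfl⟩, rfl⟩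
    exact ⟨(n:ℤ) - s, ⟨s, hs, rfl⟩, t, ht, by ring⟩

lemma sub_self_neg_image (S : Finset ℤ) :
    (S - S).image (fun x => (0:ℤ) - x) = S - S := by
  ext z
  simp only [Finset.mem_sub, Finset.mem_image]
  constructor
  · rintro ⟨x, ⟨s, hs, t, ht, rfl⟩, rfl⟩
    exact ⟨t, ht, s, hs, by ring⟩
  · rintro ⟨s, hs, t, ht, rfl⟩
    exact ⟨t - s, ⟨t, ht, s, hs, rfl⟩, by ring⟩

lemma card_image_sub_inter' (U : Finset ℤ) (c a b a' b' : ℤ) (ha : a' = c - b) (hb : b' = c - a) :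
    ((U.image (fun x => c - x)) ∩ Finset.Icc a b).card = (U ∩ Finset.Icc a' b').card := by
  subst ha; subst hb; exact card_image_sub_inter U c a b

lemma card_sumset (n k : ℕ) (S : Finset ℤ) (hS : S ⊆ Finset.Icc 0 (n:ℤ)) (hk : 2*k < n)
    (hrich : Finset.Icc ((k:ℤ)+1) (2*(n:ℤ)-(k:ℤ)-1) ⊆ S + S) :
    (S + S).card =
      ((S ∩ Finset.Icc 0 (k:ℤ) + S ∩ Finset.Icc 0 (k:ℤ)) ∩ Finset.Icc 0 (k:ℤ)).card
      + (2*n - 2*k - 1)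
      + ((mirror n S ∩ Finset.Icc 0 (k:ℤ) + mirror n S ∩ Finset.Icc 0 (k:ℤ)) ∩ Finset.Icc 0 (k:ℤ)).card := by
  have hSb : ∀ x ∈ S, 0 ≤ x ∧ x ≤ (n:ℤ) := by
    intro x hx; have := hS hx; simpa [Finset.mem_Icc] using this
  have hmb : ∀ x ∈ mirror n S, 0 ≤ x := by
    intro x hx
    simp only [mirror, Finset.mem_image] at hx
    obtain ⟨s, hs, rfl⟩ := hx
    have := hSb s hs; omega
  have hSS : S + S ⊆ Finset.Icc 0 (2*(n:ℤ)) := by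
    intro z hz
    rw [Finset.mem_add] at hz
    obtain ⟨x, hx, y, hy, rfl⟩ := hz
    have h1 := hSb x hx; have h2 := hSb y hy
    rw [Finset.mem_Icc]; omega
  rw [tri_split (S+S) 0 (k:ℤ) (2*(n:ℤ)-(k:ℤ)-1) (2*(n:ℤ)) hSS (by omega)]
  have hmid : (S + S) ∩ Finset.Icc ((k:ℤ)+1) (2*(n:ℤ)-(k:ℤ)-1) = Finset.Icc ((k:ℤ)+1) (2*(n:ℤ)-(k:ℤ)-1) :=
    Finset.inter_eq_right.mpr hrich
  have h1 : ((S + S) ∩ Finset.Icc 0 (k:ℤ)).card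
      = ((S ∩ Finset.Icc 0 (k:ℤ) + S ∩ Finset.Icc 0 (k:ℤ)) ∩ Finset.Icc 0 (k:ℤ)).card := by
    rw [sum_inter_low S S (k:ℤ) (fun x hx => (hSb x hx).1) (fun x hx => (hSb x hx).1)]
  have h2 : ((S + S) ∩ Finset.Icc ((k:ℤ)+1) (2*(n:ℤ)-(k:ℤ)-1)).card = 2*n - 2*k - 1 := by
    rw [hmid, Int.card_Icc]; omega
  have h3 : ((S + S) ∩ Finset.Icc (2*(n:ℤ)-(k:ℤ)-1+1) (2*(n:ℤ))).card
      = ((mirror n S ∩ Finset.Icc 0 (k:ℤ) + mirror n S ∩ Finset.Icc 0 (k:ℤ)) ∩ Finset.Icc 0 (k:ℤ)).card := by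
    rw [← sum_inter_low (mirror n S) (mirror n S) (k:ℤ) hmb hmb, mirror_add_mirror,
      card_image_sub_inter' (S+S) (2*(n:ℤ)) 0 (k:ℤ) (2*(n:ℤ)-(k:ℤ)-1+1) (2*(n:ℤ)) (by ring) (by ring)]
  omega

lemma card_diffset (n k : ℕ) (S : Finset ℤ) (hS : S ⊆ Finset.Icc 0 (n:ℤ)) (hk : 2*k < n) :
    (S - S).card =
      2 * ((S ∩ Finset.Icc 0 (k:ℤ) + mirror n S ∩ Finset.Icc 0 (k:ℤ)) ∩ Finset.Icc 0 (k:ℤ)).card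
      + ((S - S) ∩ Finset.Icc (-(n:ℤ)+(k:ℤ)+1) ((n:ℤ)-(k:ℤ)-1)).card := by
  have hSb : ∀ x ∈ S, 0 ≤ x ∧ x ≤ (n:ℤ) := by
    intro x hx; have := hS hx; simpa [Finset.mem_Icc] using this
  have hmb : ∀ x ∈ mirror n S, 0 ≤ x := by
    intro x hx
    simp only [mirror, Finset.mem_image] at hx
    obtain ⟨s, hs, rfl⟩ := hx
    have := hSb s hs; omega
  have hDS : S - S ⊆ Finset.Icc (-(n:ℤ)) ((n:ℤ)) := by
    intro z hz
    rw [Finset.mem_sub] at hz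
    obtain ⟨x, hx, y, hy, rfl⟩ := hz
    have h1 := hSb x hx; have h2 := hSb y hy
    rw [Finset.mem_Icc]; omega
  rw [tri_split (S-S) (-(n:ℤ)) (-(n:ℤ)+(k:ℤ)) ((n:ℤ)-(k:ℤ)-1) ((n:ℤ)) hDS (by omega)]
  have hhigh : ((S - S) ∩ Finset.Icc ((n:ℤ)-(k:ℤ)-1+1) ((n:ℤ))).card
      = ((S ∩ Finset.Icc 0 (k:ℤ) + mirror n S ∩ Finset.Icc 0 (k:ℤ)) ∩ Finset.Icc 0 (k:ℤ)).card := by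
    rw [add_comm (S ∩ Finset.Icc 0 (k:ℤ)),
      ← sum_inter_low (mirror n S) S (k:ℤ) hmb (fun x hx => (hSb x hx).1),
      mirror_add_self,
      card_image_sub_inter' (S-S) ((n:ℤ)) 0 (k:ℤ) ((n:ℤ)-(k:ℤ)-1+1) ((n:ℤ)) (by ring) (by ring)]
  have hlow : ((S - S) ∩ Finset.Icc (-(n:ℤ)) (-(n:ℤ)+(k:ℤ))).card
      = ((S ∩ Finset.Icc 0 (k:ℤ) + mirror n S ∩ Finset.Icc 0 (k:ℤ)) ∩ Finset.Icc 0 (k:ℤ)).card := by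
    rw [← hhigh]
    conv_lhs => rw [← sub_self_neg_image S]
    rw [card_image_sub_inter' (S-S) 0 (-(n:ℤ)) (-(n:ℤ)+(k:ℤ)) ((n:ℤ)-(k:ℤ)-1+1) ((n:ℤ)) (by ring) (by ring)]
  rw [hlow, hhigh]
  omega

lemma two_split (T : Finset ℤ) (b c : ℤ) (hbc : b ≤ c) (hb : -1 ≤ b) :
    (T ∩ Finset.Icc 0 c).card = (T ∩ Finset.Icc 0 b).card + (T ∩ Finset.Icc (b+1) c).card := by
  classical
  have hu : T ∩ Finset.Icc 0 c = (T ∩ Finset.Icc 0 b) ∪ (T ∩ Finset.Icc (b+1) c) := by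
    ext x
    simp only [Finset.mem_union, Finset.mem_inter, Finset.mem_Icc]
    constructor
    · rintro ⟨hx, h1, h2⟩
      rcases le_or_gt x b with h3 | h3
      · exact Or.inl ⟨hx, h1, h3⟩
      · exact Or.inr ⟨hx, by omega, h2⟩
    · rintro (⟨hx, h1, h2⟩|⟨hx, h1, h2⟩) <;> exact ⟨hx, by omega, by omega⟩
  have hd : Disjoint (T ∩ Finset.Icc 0 b) (T ∩ Finset.Icc (b+1) c) := by
    simp only [Finset.disjoint_left, Finset.mem_inter, Finset.mem_Icc]
    rintro x ⟨-, h1, h2⟩ ⟨-, h3, h4⟩; omega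
  rw [hu, Finset.card_union_of_disjoint hd]

/-- The fringe inequality propagates from order `k` to any larger order `k'` (with
`2k' < n`) given richness at `k`. -/
lemma fringe_ineq_at (n k k' : ℕ) (S : Finset ℤ) (hS : S ⊆ Finset.Icc 0 (n:ℤ))
    (hkk' : k ≤ k') (hk' : 2*k' < n)
    (hrich : Finset.Icc ((k:ℤ)+1) (2*(n:ℤ)-(k:ℤ)-1) ⊆ S + S)
    (hfr : 2 * ((S ∩ Finset.Icc 0 (k:ℤ) + mirror n S ∩ Finset.Icc 0 (k:ℤ)) ∩ Finset.Icc 0 (k:ℤ)).card <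
      ((S ∩ Finset.Icc 0 (k:ℤ) + S ∩ Finset.Icc 0 (k:ℤ)) ∩ Finset.Icc 0 (k:ℤ)).card
      + ((mirror n S ∩ Finset.Icc 0 (k:ℤ) + mirror n S ∩ Finset.Icc 0 (k:ℤ)) ∩ Finset.Icc 0 (k:ℤ)).card) :
    2 * ((S ∩ Finset.Icc 0 (k':ℤ) + mirror n S ∩ Finset.Icc 0 (k':ℤ)) ∩ Finset.Icc 0 (k':ℤ)).card <
      ((S ∩ Finset.Icc 0 (k':ℤ) + S ∩ Finset.Icc 0 (k':ℤ)) ∩ Finset.Icc 0 (k':ℤ)).card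
      + ((mirror n S ∩ Finset.Icc 0 (k':ℤ) + mirror n S ∩ Finset.Icc 0 (k':ℤ)) ∩ Finset.Icc 0 (k':ℤ)).card := by
  have hSb : ∀ x ∈ S, 0 ≤ x ∧ x ≤ (n:ℤ) := by
    intro x hx; have := hS hx; simpa [Finset.mem_Icc] using this
  have hS0 : ∀ x ∈ S, 0 ≤ x := fun x hx => (hSb x hx).1
  have hmb : ∀ x ∈ mirror n S, 0 ≤ x := by
    intro x hx
    simp only [mirror, Finset.mem_image] at hx
    obtain ⟨s, hs, rfl⟩ := hx
    have := hSb s hs; omega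
  set M := mirror n S with hM
  rw [← sum_inter_low S S (k:ℤ) hS0 hS0, ← sum_inter_low M M (k:ℤ) hmb hmb,
    ← sum_inter_low S M (k:ℤ) hS0 hmb] at hfr
  rw [← sum_inter_low S S (k':ℤ) hS0 hS0, ← sum_inter_low M M (k':ℤ) hmb hmb,
    ← sum_inter_low S M (k':ℤ) hS0 hmb]
  -- full middles for S+S and M+M on [k+1, k']
  have hfullP : (S + S) ∩ Finset.Icc ((k:ℤ)+1) (k':ℤ) = Finset.Icc ((k:ℤ)+1) (k':ℤ) := by
    refine Finset.inter_eq_right.mpr ?_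
    refine Finset.Subset.trans (Finset.Icc_subset_Icc le_rfl (by omega)) hrich
  have hfullQ : (M + M) ∩ Finset.Icc ((k:ℤ)+1) (k':ℤ) = Finset.Icc ((k:ℤ)+1) (k':ℤ) := by
    refine Finset.inter_eq_right.mpr ?_
    intro x hx
    rw [Finset.mem_Icc] at hx
    rw [hM, mirror_add_mirror, Finset.mem_image]
    refine ⟨2*(n:ℤ) - x, hrich ?_, by ring⟩
    rw [Finset.mem_Icc]; omega
  have hP : ((S + S) ∩ Finset.Icc 0 (k':ℤ)).card
      = ((S + S) ∩ Finset.Icc 0 (k:ℤ)).card + (k' - k) := by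
    rw [two_split (S+S) (k:ℤ) (k':ℤ) (by omega) (by omega), hfullP, Int.card_Icc]
    omega
  have hQ : ((M + M) ∩ Finset.Icc 0 (k':ℤ)).card
      = ((M + M) ∩ Finset.Icc 0 (k:ℤ)).card + (k' - k) := by
    rw [two_split (M+M) (k:ℤ) (k':ℤ) (by omega) (by omega), hfullQ, Int.card_Icc]
    omega
  have hR : ((S + M) ∩ Finset.Icc 0 (k':ℤ)).card
      ≤ ((S + M) ∩ Finset.Icc 0 (k:ℤ)).card + (k' - k) := by
    rw [two_split (S+M) (k:ℤ) (k':ℤ) (by omega) (by omega)]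
    have : ((S + M) ∩ Finset.Icc ((k:ℤ)+1) (k':ℤ)).card ≤ (Finset.Icc ((k:ℤ)+1) (k':ℤ)).card :=
      Finset.card_le_card Finset.inter_subset_right
    rw [Int.card_Icc] at this
    omega
  omega

/-- the MSTD fringe pair of a rich MSTD set of smallest order is a minimal
MSTD fringe pair; for every `k < k' < n/2` the induced pair is also an MSTD fringe pair
of `S`; and every MSTD fringe pair of `S` has this form. -/
theorem minimal_fringe_pair_of_rich (n : ℕ) (S A B : Finset ℤ) (k : ℕ)
    (hS : S ⊆ Finset.Icc 0 (n:ℤ))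
    (h : IsRichWith n S A B k)
    (hmin : ∀ A' B' k', IsRichWith n S A' B' k' → k ≤ k') :
    MinimalFringePair A B k ∧
    (∀ k' : ℕ, k < k' → 2 * k' < n →
      IsRichWith n S (S ∩ Finset.Icc (0:ℤ) k') (mirror n S ∩ Finset.Icc (0:ℤ) k') k') ∧
    (∀ A' B' k', IsRichWith n S A' B' k' →
      A' = S ∩ Finset.Icc (0:ℤ) k' ∧ B' = mirror n S ∩ Finset.Icc (0:ℤ) k') := by
  obtain ⟨hfp, hk, hA, hB, hrich⟩ := h
  obtain ⟨hAsub, hBsub, h0A, h0B, hineq⟩ := hfp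
  have hAS : A ⊆ S := hA ▸ Finset.inter_subset_left
  have hBM : B ⊆ mirror n S := hB ▸ Finset.inter_subset_left
  have hineq' : 2 * ((S ∩ Finset.Icc 0 (k:ℤ) + mirror n S ∩ Finset.Icc 0 (k:ℤ)) ∩ Finset.Icc 0 (k:ℤ)).card <
      ((S ∩ Finset.Icc 0 (k:ℤ) + S ∩ Finset.Icc 0 (k:ℤ)) ∩ Finset.Icc 0 (k:ℤ)).card
      + ((mirror n S ∩ Finset.Icc 0 (k:ℤ) + mirror n S ∩ Finset.Icc 0 (k:ℤ)) ∩ Finset.Icc 0 (k:ℤ)).card := by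
    rw [hA, hB]; exact hineq
  have hrich' : ∀ k' : ℕ, k ≤ k' → 2*k' < n →
      Finset.Icc ((k':ℤ)+1) (2*(n:ℤ)-(k':ℤ)-1) ⊆ S + S := by
    intro k' h1 h2
    exact Finset.Subset.trans (Finset.Icc_subset_Icc (by push_cast; omega) (by push_cast; omega)) hrich
  have richAt : ∀ k' : ℕ, k ≤ k' → 2*k' < n →
      IsRichWith n S (S ∩ Finset.Icc (0:ℤ) k') (mirror n S ∩ Finset.Icc (0:ℤ) k') k' := by
    intro k' h1 h2
    refine ⟨⟨Finset.inter_subset_right, Finset.inter_subset_right, ?_, ?_, ?_⟩, h2, rfl, rfl,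
      hrich' k' h1 h2⟩
    · exact Finset.mem_inter.mpr ⟨hAS h0A, Finset.mem_Icc.mpr ⟨le_rfl, by positivity⟩⟩
    · exact Finset.mem_inter.mpr ⟨hBM h0B, Finset.mem_Icc.mpr ⟨le_rfl, by positivity⟩⟩
    · exact fringe_ineq_at n k k' S hS h1 h2 (hrich' k le_rfl (by omega)) hineq'
  refine ⟨⟨⟨hAsub, hBsub, h0A, h0B, hineq⟩, ?_⟩, fun k' h1 h2 => richAt k' (le_of_lt h1) h2,
    ?_⟩
  · rintro ⟨A', B', k', hfp', -, hlt, hA', hB', hAA, hBB⟩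
    have hIcc : Finset.Icc (0:ℤ) (k':ℤ) = Finset.Icc (0:ℤ) (k:ℤ) ∩ Finset.Icc (0:ℤ) (k':ℤ) := by
      ext x; simp only [Finset.mem_inter, Finset.mem_Icc]; omega
    have hSk' : S ∩ Finset.Icc (0:ℤ) k' = A' := by
      rw [hA', ← hA, Finset.inter_assoc, ← hIcc]
    have hMk' : mirror n S ∩ Finset.Icc (0:ℤ) k' = B' := by
      rw [hB', ← hB, Finset.inter_assoc, ← hIcc]
    have hrich'' : Finset.Icc ((k':ℤ) + 1) (2 * (n:ℤ) - (k':ℤ) - 1) ⊆ S + S := by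
      intro x hx
      rw [Finset.mem_Icc] at hx
      rcases le_or_gt x (k:ℤ) with h3 | h3
      · exact Finset.add_subset_add hAS hAS (hAA (Finset.mem_Icc.mpr ⟨hx.1, h3⟩))
      rcases le_or_gt x (2*(n:ℤ)-(k:ℤ)-1) with h4 | h4
      · exact hrich (Finset.mem_Icc.mpr ⟨by omega, by push_cast; omega⟩)
      · have hx2 : 2*(n:ℤ) - x ∈ Finset.Icc ((k':ℤ)+1) (k:ℤ) := by
          rw [Finset.mem_Icc]; omega
        have := Finset.add_subset_add hBM hBM (hBB hx2)
        rw [mirror_add_mirror, Finset.mem_image] at this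
        obtain ⟨y, hy, hyx⟩ := this
        have : y = x := by omega
        exact this ▸ hy
    have := hmin A' B' k' ⟨hfp', by omega, hSk', hMk', hrich''⟩
    omega
  · rintro A' B' k' ⟨-, -, hA', hB', -⟩
    exact ⟨hA'.symm, hB'.symm⟩
end

section
/- For every k ≥ 0 and every A ⊆ [0,k] with 0 ∈ A, the limit σ(A; k) = lim_{n→∞} σ_n(A; k) exists and is positive. -/
open Finset Filter Pointwise
open scoped Classical

lemma count_avoid (I : Finset ℤ) : ∀ (s : Finset ℤ) (f : ℤ → Finset ℤ),
    (∀ i ∈ I, f i ⊆ s) → (∀ i ∈ I, (f i).Nonempty) →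
    (∀ i ∈ I, ∀ j ∈ I, i ≠ j → Disjoint (f i) (f j)) →
    (((s.powerset.filter (fun U => ∀ i ∈ I, ¬ f i ⊆ U)).card : ℝ)
      ≤ 2 ^ s.card * ∏ i ∈ I, (1 - (1/2:ℝ) ^ (f i).card)) := by
  induction I using Finset.induction_on with
  | empty => intro s f _ _ _; simp
  | @insert i I hi ih =>
    intro s f hsub hne hdisj
    have hfi : f i ⊆ s := hsub i (mem_insert_self i I)
    have hfine : (f i).Nonempty := hne i (mem_insert_self i I)
    -- target product set
    set t := (((f i).powerset.erase (f i)) ×ˢ ((s \ f i).powerset.filter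
        (fun U => ∀ j ∈ I, ¬ f j ⊆ U))) with ht
    have hcard : ((s.powerset.filter (fun U => ∀ j ∈ insert i I, ¬ f j ⊆ U)).card : ℕ) ≤ t.card := by
      apply Finset.card_le_card_of_injOn (fun U => (U ∩ f i, U \ f i))
      · intro U hU
        simp only [Finset.mem_coe, mem_filter, mem_powerset] at hU
        obtain ⟨hUs, hcond⟩ := hU
        have hnoti : ¬ f i ⊆ U := hcond i (mem_insert_self i I)
        simp only [Finset.mem_coe, ht, mem_product, mem_erase, mem_powerset, mem_filter]
        refine ⟨⟨?_, inter_subset_right⟩, ?_, ?_⟩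
        · intro h
          exact hnoti (by rw [← h]; exact inter_subset_left)
        · exact sdiff_subset_sdiff hUs (le_refl _)
        · intro j hj hsubj
          exact hcond j (mem_insert_of_mem hj) (hsubj.trans sdiff_subset)
      · intro U _ V _ h
        simp only [Prod.mk.injEq] at h
        have : U ∩ f i ∪ U \ f i = V ∩ f i ∪ V \ f i := by rw [h.1, h.2]
        have hU : U ∩ f i ∪ U \ f i = U := by
          ext x; simp only [mem_union, mem_inter, Finset.mem_sdiff]; tauto
        have hV : V ∩ f i ∪ V \ f i = V := by
          ext x; simp only [mem_union, mem_inter, Finset.mem_sdiff]; tauto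
        rwa [hU, hV] at this
    have hcardt : (t.card : ℝ) = (2 ^ (f i).card - 1) *
        ((s \ f i).powerset.filter (fun U => ∀ j ∈ I, ¬ f j ⊆ U)).card := by
      rw [ht, card_product, card_erase_of_mem (mem_powerset_self _), card_powerset]
      push_cast [Nat.cast_sub (Nat.one_le_two_pow)]
      ring
    have hih := ih (s \ f i) f
      (fun j hj => subset_sdiff.2 ⟨hsub j (mem_insert_of_mem hj),
        (hdisj j (mem_insert_of_mem hj) i (mem_insert_self i I) (by rintro rfl; exact hi hj))⟩)
      (fun j hj => hne j (mem_insert_of_mem hj))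
      (fun j hj j' hj' hne' => hdisj j (mem_insert_of_mem hj) j' (mem_insert_of_mem hj') hne')
    have hcs : (s \ f i).card = s.card - (f i).card := card_sdiff_of_subset hfi
    have hle : (f i).card ≤ s.card := card_le_card hfi
    have h2 : (2:ℝ) ^ (s.card - (f i).card) * 2 ^ (f i).card = 2 ^ s.card := by
      rw [← pow_add, Nat.sub_add_cancel hle]
    rw [prod_insert hi]
    calc ((s.powerset.filter (fun U => ∀ j ∈ insert i I, ¬ f j ⊆ U)).card : ℝ)
        ≤ (t.card : ℝ) := by exact_mod_cast hcard
      _ = (2 ^ (f i).card - 1) * ((s \ f i).powerset.filter (fun U => ∀ j ∈ I, ¬ f j ⊆ U)).card := hcardt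
      _ ≤ (2 ^ (f i).card - 1) * (2 ^ (s \ f i).card * ∏ j ∈ I, (1 - (1/2:ℝ) ^ (f j).card)) := by
          have hnn : (0:ℝ) ≤ 2 ^ (f i).card - 1 := by
            have : (1:ℝ) ≤ 2 ^ (f i).card := one_le_pow₀ (by norm_num)
            linarith
          exact mul_le_mul_of_nonneg_left hih hnn
      _ = 2 ^ s.card * ((1 - (1/2:ℝ) ^ (f i).card) * ∏ j ∈ I, (1 - (1/2:ℝ) ^ (f j).card)) := by
          have h3 : (2:ℝ) ^ (f i).card * (1/2:ℝ) ^ (f i).card = 1 := by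
            rw [← mul_pow]; norm_num
          rw [hcs, ← h2]
          linear_combination ((2:ℝ) ^ (s.card - (f i).card) * ∏ j ∈ I, (1 - (1/2:ℝ) ^ (f j).card)) * h3

noncomputable def goodSet (A : Finset ℤ) (k n : ℕ) : Finset (Finset ℤ) :=
  (Finset.Icc (0:ℤ) n).powerset.filter
    (fun T => T ∩ Finset.Icc (0:ℤ) k = A ∧ Finset.Icc ((k:ℤ)+1) n ⊆ T + T)

noncomputable def blockGood (A : Finset ℤ) (k n : ℕ) : Finset (Finset ℤ) :=
  (goodSet A k n).filter (fun T => Finset.Icc ((k:ℤ)+1) ((2*k+4 : ℕ) : ℤ) ⊆ T)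

noncomputable def badSet (A : Finset ℤ) (k n : ℕ) : Finset (Finset ℤ) :=
  (Finset.Icc (0:ℤ) n).powerset.filter
    (fun T => T ∩ Finset.Icc (0:ℤ) k = A ∧ Finset.Icc ((k:ℤ)+1) ((2*k+4:ℕ) : ℤ) ⊆ T ∧
      ((n:ℤ)+1) ∉ T + T)

-- L2 : sums cover

lemma sigmaN_eq (A : Finset ℤ) (k n : ℕ) : sigmaN A k n = ((goodSet A k n).card : ℝ) / 2 ^ n := rfl

lemma good_mono (A : Finset ℤ) (k n : ℕ) (hk : k ≤ n) :
    (goodSet A k (n+1)).card ≤ 2 * (goodSet A k n).card := by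
  classical
  set f : Finset ℤ → Finset ℤ := fun T => T ∩ Finset.Icc (0:ℤ) n with hf
  have hmaps : ∀ T ∈ goodSet A k (n+1), f T ∈ goodSet A k n := by
    intro T hT
    simp only [goodSet, mem_filter, mem_powerset] at hT ⊢
    obtain ⟨hTs, hpre, hsum⟩ := hT
    refine ⟨inter_subset_right, ?_, ?_⟩
    · rw [← hpre, hf]
      ext x
      simp only [mem_inter, mem_Icc]
      constructor
      · rintro ⟨⟨h1, _⟩, h3⟩; exact ⟨h1, h3⟩
      · rintro ⟨h1, h2, h3⟩
        refine ⟨⟨h1, h2, ?_⟩, h2, h3⟩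
        exact h3.trans (by exact_mod_cast Nat.cast_le.2 hk)
    · intro j hj
      rw [mem_Icc] at hj
      have hj' : j ∈ T + T := by
        apply hsum; rw [mem_Icc]; exact ⟨hj.1, hj.2.trans (by push_cast; linarith)⟩
      rw [Finset.mem_add] at hj' ⊢
      obtain ⟨a, ha, b, hb, rfl⟩ := hj'
      have ha' := hTs ha; have hb' := hTs hb
      rw [mem_Icc] at ha' hb'
      refine ⟨a, ?_, b, ?_, rfl⟩ <;> rw [hf, mem_inter, mem_Icc]
      · exact ⟨ha, ha'.1, by linarith [hb'.1, hj.2]⟩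
      · exact ⟨hb, hb'.1, by linarith [ha'.1, hj.2]⟩
  calc (goodSet A k (n+1)).card
      ≤ 2 * ((goodSet A k (n+1)).image f).card := by
        apply Finset.card_le_mul_card_image
        intro b hb
        -- fiber has at most 2 elements
        have : (goodSet A k (n+1)).filter (fun T => f T = b) ⊆ {b, insert ((n:ℤ)+1) b} := by
          intro T hT
          simp only [mem_filter] at hT
          obtain ⟨hT1, hT2⟩ := hT
          simp only [goodSet, mem_filter, mem_powerset] at hT1
          have hTs := hT1.1
          have : T = b ∨ T = insert ((n:ℤ)+1) b := by
            by_cases hmem : ((n:ℤ)+1) ∈ T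
            · right
              rw [← hT2, hf]
              ext x
              simp only [mem_insert, mem_inter, mem_Icc]
              constructor
              · intro hx
                have := hTs hx; rw [mem_Icc] at this
                by_cases hxn : x = (n:ℤ)+1
                · left; exact hxn
                · right; push_cast at this; exact ⟨hx, this.1, by omega⟩
              · rintro (rfl | ⟨h1, _, _⟩)
                · exact hmem
                · exact h1
            · left
              rw [← hT2, hf]
              ext x
              simp only [mem_inter, mem_Icc]
              constructor
              · intro hx
                have := hTs hx; rw [mem_Icc] at this
                push_cast at this
                have hxn : x ≠ (n:ℤ)+1 := fun h => hmem (h ▸ hx)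
                exact ⟨hx, this.1, by omega⟩
              · rintro ⟨h1, _, _⟩; exact h1
          rcases this with h | h <;> simp [h]
        calc ((goodSet A k (n+1)).filter (fun T => f T = b)).card
            ≤ ({b, insert ((n:ℤ)+1) b} : Finset (Finset ℤ)).card := card_le_card this
          _ ≤ 2 := card_insert_le _ _ |>.trans (by simp)
    _ ≤ 2 * (goodSet A k n).card := by
        apply Nat.mul_le_mul_left
        apply card_le_card
        intro b hb
        rw [mem_image] at hb
        obtain ⟨T, hT, rfl⟩ := hb
        exact hmaps T hT

lemma sums_cover (k : ℕ) (T : Finset ℤ) (h0 : (0:ℤ) ∈ T)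
    (hblk : Finset.Icc ((k:ℤ)+1) ((2*k+4:ℕ) : ℤ) ⊆ T) :
    Finset.Icc ((k:ℤ)+1) (2*((2*k+4:ℕ) : ℤ)) ⊆ T + T := by
  intro j hj
  rw [mem_Icc] at hj
  set N : ℤ := ((2*k+4:ℕ) : ℤ) with hN
  have hNk : N = 2*(k:ℤ)+4 := by push_cast [hN]; ring
  by_cases hle : j ≤ N
  · have : j ∈ T := hblk (by rw [mem_Icc]; exact ⟨hj.1, hle⟩)
    rw [Finset.mem_add]
    exact ⟨0, h0, j, this, by ring⟩
  · push_neg at hle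
    set a : ℤ := max ((k:ℤ)+1) (j - N) with ha
    have h1 : a ∈ T := hblk (by rw [mem_Icc]; constructor <;> omega)
    have h2 : j - a ∈ T := hblk (by rw [mem_Icc]; constructor <;> omega)
    rw [Finset.mem_add]
    exact ⟨a, h1, j - a, h2, by ring⟩

-- L3 : block lower bound at n = 2N

lemma block_lb (k : ℕ) (A : Finset ℤ) (hA : A ⊆ Finset.Icc (0:ℤ) k) (h0 : (0:ℤ) ∈ A) :
    2 ^ (2*k+4) ≤ (blockGood A k (2*(2*k+4))).card := by
  classical
  set N : ℕ := 2*k+4 with hN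
  set g : Finset ℤ → Finset ℤ :=
    fun U => A ∪ Finset.Icc ((k:ℤ)+1) (N:ℤ) ∪ U with hg
  have hcard : ((Finset.Icc ((N:ℤ)+1) ((2*N : ℕ):ℤ)).powerset).card = 2 ^ N := by
    rw [card_powerset, Int.card_Icc]
    congr 1
    push_cast
    omega
  rw [← hcard]
  apply Finset.card_le_card_of_injOn g
  · intro U hU
    rw [Finset.mem_coe, mem_powerset] at hU
    have hgU : ∀ x ∈ g U, (0:ℤ) ≤ x ∧ x ≤ ((2*N:ℕ):ℤ) := by
      intro x hx
      rw [hg] at hx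
      simp only [mem_union] at hx
      rcases hx with (hx | hx) | hx
      · have := hA hx; rw [mem_Icc] at this; push_cast; omega
      · rw [mem_Icc] at hx; push_cast; omega
      · have := hU hx; rw [mem_Icc] at this; push_cast; omega
    have h0T : (0:ℤ) ∈ g U := by rw [hg]; simp [h0]
    have hblkT : Finset.Icc ((k:ℤ)+1) ((N:ℕ):ℤ) ⊆ g U := by
      rw [hg]; intro x hx; simp only [mem_union]; left; right; exact hx
    simp only [Finset.mem_coe, blockGood, goodSet, mem_filter, mem_powerset]
    refine ⟨⟨?_, ?_, ?_⟩, hblkT⟩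
    · intro x hx; rw [mem_Icc]; exact hgU x hx
    · -- prefix
      ext x
      simp only [mem_inter, mem_Icc]
      constructor
      · rintro ⟨hx, hx0, hxk⟩
        rw [hg] at hx; simp only [mem_union] at hx
        rcases hx with (hx | hx) | hx
        · exact hx
        · rw [mem_Icc] at hx; omega
        · have := hU hx; rw [mem_Icc] at this; push_cast at this; omega
      · intro hx
        have := hA hx; rw [mem_Icc] at this
        exact ⟨by rw [hg]; simp [hx], this.1, this.2⟩
    · -- sums
      have := sums_cover k (g U) h0T hblkT
      intro j hj
      apply this
      rw [mem_Icc] at hj ⊢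
      push_cast at hj ⊢
      omega
  · -- injective
    intro U hU V hV h
    simp only [coe_powerset, Set.mem_preimage, Set.mem_powerset_iff, coe_subset] at hU hV
    have key : ∀ (W : Finset ℤ), W ⊆ Finset.Icc ((N:ℤ)+1) ((2*N:ℕ):ℤ) →
        g W ∩ Finset.Icc ((N:ℤ)+1) ((2*N:ℕ):ℤ) = W := by
      intro W hW
      ext x
      simp only [hg, mem_inter, mem_union, mem_Icc]
      constructor
      · rintro ⟨(hx | hx) | hx, hx2⟩
        · have := hA hx; rw [mem_Icc] at this; push_cast at hx2; omega
        · exact absurd hx.2 (by omega)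
        · exact hx
      · intro hx
        have := hW hx; rw [mem_Icc] at this
        exact ⟨Or.inr hx, this.1, this.2⟩
    rw [← key U hU, ← key V hV, h]

lemma block_step (k : ℕ) (A : Finset ℤ) (h0 : (0:ℤ) ∈ A) (n : ℕ) (hn : k ≤ n) :
    2 * (blockGood A k n).card ≤ (blockGood A k (n+1)).card + (badSet A k n).card := by
  classical
  set G := blockGood A k n with hG
  set G1 := G.filter (fun T => ((n:ℤ)+1) ∈ T + T) with hG1
  set G2 := G.filter (fun T => ¬ ((n:ℤ)+1) ∈ T + T) with hG2
  have hsplit : G1.card + G2.card = G.card := card_filter_add_card_filter_not _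
  -- G2 ⊆ badSet
  have hG2sub : G2 ⊆ badSet A k n := by
    intro T hT
    simp only [hG2, hG, blockGood, goodSet, mem_filter, mem_powerset] at hT
    obtain ⟨⟨⟨hTs, hpre, _⟩, hblk⟩, hnot⟩ := hT
    simp only [badSet, mem_filter, mem_powerset]
    exact ⟨hTs, hpre, hblk, hnot⟩
  -- members of blockGood n contain 0
  have h0mem : ∀ T ∈ G, (0:ℤ) ∈ T := by
    intro T hT
    simp only [hG, blockGood, goodSet, mem_filter, mem_powerset] at hT
    have := hT.1.2.1
    have : (0:ℤ) ∈ T ∩ Finset.Icc (0:ℤ) k := this ▸ h0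
    exact (mem_inter.1 this).1
  -- G1 ⊆ blockGood (n+1)
  have hsub1 : G1 ⊆ blockGood A k (n+1) := by
    intro T hT
    simp only [hG1, mem_filter] at hT
    obtain ⟨hTG, hmem⟩ := hT
    simp only [hG, blockGood, goodSet, mem_filter, mem_powerset] at hTG
    obtain ⟨⟨hTs, hpre, hsum⟩, hblk⟩ := hTG
    simp only [blockGood, goodSet, mem_filter, mem_powerset]
    refine ⟨⟨hTs.trans (Icc_subset_Icc le_rfl (by push_cast; linarith)), hpre, ?_⟩, hblk⟩
    intro j hj
    rw [mem_Icc] at hj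
    by_cases hje : j ≤ (n:ℤ)
    · exact hsum (by rw [mem_Icc]; exact ⟨hj.1, hje⟩)
    · have : j = (n:ℤ)+1 := by push_cast at hj; omega
      rwa [this]
  -- image of G under insert (n+1) is in blockGood (n+1)
  have hsub2 : G.image (insert ((n:ℤ)+1)) ⊆ blockGood A k (n+1) := by
    intro T' hT'
    rw [mem_image] at hT'
    obtain ⟨T, hT, rfl⟩ := hT'
    have h0T := h0mem T hT
    simp only [hG, blockGood, goodSet, mem_filter, mem_powerset] at hT
    obtain ⟨⟨hTs, hpre, hsum⟩, hblk⟩ := hT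
    simp only [blockGood, goodSet, mem_filter, mem_powerset]
    refine ⟨⟨?_, ?_, ?_⟩, ?_⟩
    · intro x hx
      rw [mem_insert] at hx
      rw [mem_Icc]
      rcases hx with rfl | hx
      · push_cast; omega
      · have := hTs hx; rw [mem_Icc] at this; push_cast at this ⊢; omega
    · rw [insert_inter_of_notMem (by rw [mem_Icc]; push_cast; omega)]
      exact hpre
    · intro j hj
      rw [mem_Icc] at hj
      by_cases hje : j ≤ (n:ℤ)
      · have : j ∈ T + T := hsum (by rw [mem_Icc]; exact ⟨hj.1, hje⟩)
        rw [Finset.mem_add] at this ⊢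
        obtain ⟨a, ha, b, hb, rfl⟩ := this
        exact ⟨a, mem_insert_of_mem ha, b, mem_insert_of_mem hb, rfl⟩
      · have hj' : j = (n:ℤ)+1 := by push_cast at hj; omega
        rw [Finset.mem_add]
        exact ⟨j, by rw [hj']; exact mem_insert_self _ _, 0,
          mem_insert_of_mem h0T, by ring⟩
    · exact hblk.trans (subset_insert _ _)
  -- counting
  have hdisj : Disjoint G1 (G.image (insert ((n:ℤ)+1))) := by
    rw [disjoint_left]
    intro T hT1 hT2
    rw [mem_image] at hT2
    obtain ⟨S, _, rfl⟩ := hT2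
    simp only [hG1, hG, blockGood, goodSet, mem_filter, mem_powerset] at hT1
    have := hT1.1.1.1 (mem_insert_self ((n:ℤ)+1) S)
    rw [mem_Icc] at this
    omega
  have hinj : (G.image (insert ((n:ℤ)+1))).card = G.card := by
    apply card_image_of_injOn
    intro S hS S' hS' h
    have hnot : ∀ W ∈ G, ((n:ℤ)+1) ∉ W := by
      intro W hW hmem
      simp only [hG, blockGood, goodSet, mem_filter, mem_powerset] at hW
      have := hW.1.1 hmem
      rw [mem_Icc] at this
      omega
    have := congrArg (Finset.erase · ((n:ℤ)+1)) h
    simpa [erase_insert (hnot S hS), erase_insert (hnot S' hS')] using this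
  have hunion : G1.card + G.card ≤ (blockGood A k (n+1)).card := by
    rw [← hinj, ← card_union_of_disjoint hdisj]
    exact card_le_card (union_subset hsub1 hsub2)
  have hbad : G2.card ≤ (badSet A k n).card := card_le_card hG2sub
  omega

lemma bad_bound (k : ℕ) (A : Finset ℤ) (n : ℕ) (hn : 2*(2*k+4) ≤ n) :
    ((badSet A k n).card : ℝ) ≤
      2^(n - (2*k+4)) * (1/2)^(k+4) * (3/4)^(n/2 - (2*k+4)) := by
  classical
  set N : ℕ := 2*k+4 with hN
  set s : Finset ℤ := Finset.Icc ((N:ℤ)+1) (n:ℤ) with hs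
  set M : ℤ := ((n/2 : ℕ) : ℤ) with hM
  set I : Finset ℤ := Finset.Icc ((k:ℤ)+1) M with hI
  set f : ℤ → Finset ℤ := fun a => if a ≤ (N:ℤ) then {(n:ℤ)+1-a} else {a, (n:ℤ)+1-a} with hf
  have hmemf : ∀ a x : ℤ, x ∈ f a → (x = (n:ℤ)+1-a ∨ ((N:ℤ) < a ∧ x = a)) := by
    intro a x hx
    simp only [hf] at hx
    split_ifs at hx with hle
    · rw [mem_singleton] at hx; left; exact hx
    · rw [mem_insert, mem_singleton] at hx
      rcases hx with rfl | rfl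
      · right; exact ⟨by omega, rfl⟩
      · left; rfl
  -- step 1: injective restriction into the powerset filter
  have step1 : (badSet A k n).card ≤
      (s.powerset.filter (fun U => ∀ a ∈ I, ¬ f a ⊆ U)).card := by
    apply Finset.card_le_card_of_injOn (fun T => T ∩ s)
    · intro T hT
      simp only [Finset.mem_coe, badSet, mem_filter, mem_powerset] at hT
      obtain ⟨hTs, hpre, hblk, hnot⟩ := hT
      rw [Finset.mem_coe, mem_filter, mem_powerset]
      refine ⟨inter_subset_right, ?_⟩
      intro a ha hsub
      rw [hI, mem_Icc] at ha
      apply hnot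
      rw [Finset.mem_add]
      by_cases hle : a ≤ (N:ℤ)
      · have h1 : (n:ℤ)+1-a ∈ T := by
          have : (n:ℤ)+1-a ∈ T ∩ s := hsub (by simp only [hf, if_pos hle, mem_singleton])
          exact (mem_inter.1 this).1
        have h2 : a ∈ T := hblk (by rw [mem_Icc]; exact ⟨ha.1, hle⟩)
        exact ⟨a, h2, (n:ℤ)+1-a, h1, by ring⟩
      · have h1 : (n:ℤ)+1-a ∈ T := by
          have : (n:ℤ)+1-a ∈ T ∩ s := hsub (by simp only [hf, if_neg hle]; simp)
          exact (mem_inter.1 this).1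
        have h2 : a ∈ T := by
          have : a ∈ T ∩ s := hsub (by simp only [hf, if_neg hle]; simp)
          exact (mem_inter.1 this).1
        exact ⟨a, h2, (n:ℤ)+1-a, h1, by ring⟩
    · intro T hT T' hT' h
      have heq : T ∩ s = T' ∩ s := h
      rw [Finset.mem_coe] at hT hT'
      simp only [badSet, mem_filter, mem_powerset] at hT hT'
      obtain ⟨hTs, hpre, hblk, -⟩ := hT
      obtain ⟨hTs', hpre', hblk', -⟩ := hT'
      ext x
      by_cases h1 : x < 0 ∨ (n:ℤ) < x
      · constructor <;> intro hx
        · exact absurd (by have := hTs hx; rw [mem_Icc] at this; omega : False) not_false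
        · exact absurd (by have := hTs' hx; rw [mem_Icc] at this; omega : False) not_false
      · push_neg at h1
        by_cases h2 : x ≤ (k:ℤ)
        · have e1 : x ∈ T ↔ x ∈ A := by
            rw [← hpre, mem_inter, mem_Icc]
            constructor
            · intro hx; exact ⟨hx, h1.1, h2⟩
            · rintro ⟨hx, -⟩; exact hx
          have e2 : x ∈ T' ↔ x ∈ A := by
            rw [← hpre', mem_inter, mem_Icc]
            constructor
            · intro hx; exact ⟨hx, h1.1, h2⟩
            · rintro ⟨hx, -⟩; exact hx
          rw [e1, e2]
        · by_cases h3 : x ≤ (N:ℤ)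
          · constructor <;> intro _
            · exact hblk' (by rw [mem_Icc]; omega)
            · exact hblk (by rw [mem_Icc]; omega)
          · have hxs : x ∈ s := by rw [hs, mem_Icc]; omega
            constructor <;> intro hx
            · have : x ∈ T' ∩ s := heq ▸ (mem_inter.2 ⟨hx, hxs⟩)
              exact (mem_inter.1 this).1
            · have : x ∈ T ∩ s := heq.symm ▸ (mem_inter.2 ⟨hx, hxs⟩)
              exact (mem_inter.1 this).1
  have hsubI : ∀ a ∈ I, f a ⊆ s := by
    intro a ha x hx
    rw [hI, mem_Icc] at ha
    rcases hmemf a x hx with rfl | ⟨hlt, rfl⟩ <;> (rw [hs, mem_Icc]; constructor <;> omega)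
  have hneI : ∀ a ∈ I, (f a).Nonempty := by
    intro a _
    simp only [hf]
    split_ifs
    · exact ⟨_, mem_singleton_self _⟩
    · exact ⟨a, mem_insert_self _ _⟩
  have hdisjI : ∀ a ∈ I, ∀ b ∈ I, a ≠ b → Disjoint (f a) (f b) := by
    intro a ha b hb hab
    rw [hI, mem_Icc] at ha hb
    rw [disjoint_left]
    intro x hxa hxb
    rcases hmemf a x hxa with h1 | ⟨ha', h1⟩ <;> rcases hmemf b x hxb with h2 | ⟨hb', h2⟩ <;> omega
  have hcount := count_avoid I s f hsubI hneI hdisjI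
  have hscard : s.card = n - N := by rw [hs, Int.card_Icc]; omega
  have hprod : ∏ a ∈ I, (1 - (1/2:ℝ) ^ (f a).card) = (1/2)^(k+4) * (3/4)^(n/2 - N) := by
    have hIsplit : I = Finset.Icc ((k:ℤ)+1) (N:ℤ) ∪ Finset.Icc ((N:ℤ)+1) M := by
      rw [hI]; ext x; simp only [mem_union, mem_Icc]; omega
    have hdisj2 : Disjoint (Finset.Icc ((k:ℤ)+1) (N:ℤ)) (Finset.Icc ((N:ℤ)+1) M) := by
      rw [disjoint_left]; intro x hx hx'; rw [mem_Icc] at hx hx'; omega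
    have e1 : ∀ a ∈ Finset.Icc ((k:ℤ)+1) (N:ℤ), (1 - (1/2:ℝ) ^ (f a).card) = (1/2:ℝ) := by
      intro a ha; rw [mem_Icc] at ha
      have : f a = {(n:ℤ)+1-a} := by simp only [hf]; rw [if_pos ha.2]
      rw [this, card_singleton]; norm_num
    have e2 : ∀ a ∈ Finset.Icc ((N:ℤ)+1) M, (1 - (1/2:ℝ) ^ (f a).card) = (3/4:ℝ) := by
      intro a ha; rw [mem_Icc] at ha
      have hne2 : (n:ℤ)+1-a ∉ ({a} : Finset ℤ) := by rw [mem_singleton]; omega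
      have : f a = {a, (n:ℤ)+1-a} := by simp only [hf]; rw [if_neg (by omega)]
      rw [this, pair_comm, card_insert_of_notMem hne2, card_singleton]; norm_num
    rw [hIsplit, prod_union hdisj2, Finset.prod_congr rfl e1, Finset.prod_congr rfl e2,
      prod_const, prod_const, Int.card_Icc, Int.card_Icc]
    congr 2 <;> omega
  calc ((badSet A k n).card : ℝ)
      ≤ ((s.powerset.filter (fun U => ∀ a ∈ I, ¬ f a ⊆ U)).card : ℝ) := by exact_mod_cast step1
    _ ≤ 2 ^ s.card * ∏ a ∈ I, (1 - (1/2:ℝ) ^ (f a).card) := hcount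
    _ = 2^(n - N) * ((1/2)^(k+4) * (3/4)^(n/2 - N)) := by rw [hscard, hprod]
    _ = 2^(n - N) * (1/2)^(k+4) * (3/4)^(n/2 - N) := by ring

lemma sum34 (m : ℕ) : ∑ t ∈ Finset.range m, (3/4:ℝ)^(t/2) ≤ 8 := by
  have heven : ∀ p : ℕ, ∑ t ∈ Finset.range (2*p), (3/4:ℝ)^(t/2) = 2 * ∑ j ∈ Finset.range p, (3/4:ℝ)^j := by
    intro p
    induction p with
    | zero => simp
    | succ p ih =>
      have h1 : 2*(p+1) = (2*p) + 1 + 1 := by ring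
      rw [h1, Finset.sum_range_succ, Finset.sum_range_succ, ih, Finset.sum_range_succ]
      have e1 : (2*p)/2 = p := by omega
      have e2 : (2*p+1)/2 = p := by omega
      rw [e1, e2]; ring
  have hgeom : ∑ j ∈ Finset.range m, (3/4:ℝ)^j ≤ 4 := by
    rw [geom_sum_eq (by norm_num) m]
    have : (0:ℝ) ≤ (3/4:ℝ)^m := by positivity
    have h2 : ((3/4:ℝ)^m - 1)/((3/4:ℝ) - 1) = 4*(1 - (3/4:ℝ)^m) := by ring
    rw [h2]; nlinarith
  calc ∑ t ∈ Finset.range m, (3/4:ℝ)^(t/2)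
      ≤ ∑ t ∈ Finset.range (2*m), (3/4:ℝ)^(t/2) := by
        apply Finset.sum_le_sum_of_subset_of_nonneg
        · apply Finset.range_subset_range.2; omega
        · intro t _ _; positivity
    _ = 2 * ∑ j ∈ Finset.range m, (3/4:ℝ)^j := heven m
    _ ≤ 8 := by linarith

lemma beta_lb (k : ℕ) (A : Finset ℤ) (hA : A ⊆ Finset.Icc (0:ℤ) k) (h0 : (0:ℤ) ∈ A) (m : ℕ) :
    (3/4) * (1/2:ℝ)^(2*k+4) ≤ ((blockGood A k (2*(2*k+4) + m)).card : ℝ) / 2^(2*(2*k+4) + m) := by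
  set N : ℕ := 2*k+4 with hN
  have key : ∀ m : ℕ, (1/2:ℝ)^N - (1/2)^(N+1) * (1/2)^(k+4) * ∑ t ∈ Finset.range m, (3/4:ℝ)^(t/2)
      ≤ ((blockGood A k (2*N + m)).card : ℝ) / 2^(2*N + m) := by
    intro m
    induction m with
    | zero =>
      simp only [Finset.range_zero, Finset.sum_empty, mul_zero, sub_zero]
      have hb : ((2:ℝ)^N) ≤ ((blockGood A k (2*N)).card : ℝ) := by
        exact_mod_cast block_lb k A hA h0
      rw [le_div_iff₀ (by positivity)]
      have h2 : (2:ℝ)^(2*N) = 2^N * 2^N := by rw [two_mul, pow_add]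
      have h3 : (1/2:ℝ)^N * 2^(2*N) = 2^N := by
        rw [h2, ← mul_assoc, ← mul_pow]; norm_num
      rw [Nat.add_zero, h3]; exact hb
    | succ m ih =>
      set n : ℕ := 2*N + m with hn
      have hstep := block_step k A h0 n (by omega)
      have hbad := bad_bound k A n (by omega)
      have hstepR : 2 * ((blockGood A k n).card:ℝ) ≤
          ((blockGood A k (n+1)).card:ℝ) + ((badSet A k n).card:ℝ) := by exact_mod_cast hstep
      have h2n : (0:ℝ) < 2^n := by positivity
      have h2n1 : (0:ℝ) < 2^(n+1) := by positivity
      -- b_n/2^n - bad/2^{n+1} ≤ b_{n+1}/2^{n+1}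
      have hq : ((blockGood A k n).card:ℝ)/2^n - ((badSet A k n).card:ℝ)/2^(n+1) ≤
          ((blockGood A k (n+1)).card:ℝ)/2^(n+1) := by
        have e : ((blockGood A k n).card:ℝ)/2^n = (2*((blockGood A k n).card:ℝ))/2^(n+1) := by
          rw [pow_succ]; field_simp
        rw [e, ← sub_div]
        gcongr
        linarith
      -- bad/2^{n+1} ≤ (1/2)^{N+1}*(1/2)^{k+4}*(3/4)^(m/2)
      have hpow : (2:ℝ)^(n - N) * 2^(N+1) = 2^(n+1) := by rw [← pow_add]; congr 1; omega
      have hndiv : n/2 - N = m/2 := by omega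
      have hbad2 : ((badSet A k n).card:ℝ)/2^(n+1) ≤ (1/2)^(N+1) * (1/2)^(k+4) * (3/4:ℝ)^(m/2) := by
        rw [div_le_iff₀ h2n1, ← hpow]
        calc ((badSet A k n).card:ℝ)
            ≤ 2^(n - N) * (1/2)^(k+4) * (3/4)^(n/2 - N) := hbad
          _ = (1/2)^(N+1) * (1/2)^(k+4) * (3/4:ℝ)^(m/2) * (2^(n-N) * 2^(N+1)) := by
              rw [hndiv]
              have hone : (1/2:ℝ)^(N+1) * 2^(N+1) = 1 := by rw [← mul_pow]; norm_num
              linear_combination (-((2:ℝ)^(n-N) * (1/2)^(k+4) * (3/4:ℝ)^(m/2))) * hone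
      rw [Finset.sum_range_succ]
      have harith : (1/2:ℝ)^N - (1/2)^(N+1) * (1/2)^(k+4) *
          (∑ t ∈ Finset.range m, (3/4:ℝ)^(t/2) + (3/4:ℝ)^(m/2)) =
          ((1/2:ℝ)^N - (1/2)^(N+1) * (1/2)^(k+4) * ∑ t ∈ Finset.range m, (3/4:ℝ)^(t/2))
            - (1/2)^(N+1) * (1/2)^(k+4) * (3/4:ℝ)^(m/2) := by ring
      have hrw : 2*N + (m+1) = n + 1 := by omega
      rw [harith, hrw]
      calc (1/2:ℝ)^N - (1/2)^(N+1) * (1/2)^(k+4) * ∑ t ∈ Finset.range m, (3/4:ℝ)^(t/2)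
            - (1/2)^(N+1) * (1/2)^(k+4) * (3/4:ℝ)^(m/2)
          ≤ ((blockGood A k n).card:ℝ)/2^n - (1/2)^(N+1) * (1/2)^(k+4) * (3/4:ℝ)^(m/2) := by
            linarith [ih]
        _ ≤ ((blockGood A k n).card:ℝ)/2^n - ((badSet A k n).card:ℝ)/2^(n+1) := by linarith
        _ ≤ ((blockGood A k (n+1)).card:ℝ)/2^(n+1) := hq
  have hkey := key m
  have hsum := sum34 m
  have hC : (0:ℝ) ≤ (1/2:ℝ)^(N+1) * (1/2)^(k+4) := by positivity
  have hsmall : (1/2:ℝ)^(k+4) ≤ 1/16 := by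
    calc (1/2:ℝ)^(k+4) ≤ (1/2:ℝ)^4 :=
          pow_le_pow_of_le_one (by norm_num) (by norm_num) (by omega)
      _ = 1/16 := by norm_num
  have hNpos : (0:ℝ) < (1/2:ℝ)^N := by positivity
  have h8 : (1/2:ℝ)^(N+1) * (1/2)^(k+4) * ∑ t ∈ Finset.range m, (3/4:ℝ)^(t/2)
      ≤ (1/4) * (1/2:ℝ)^N := by
    have hsum0 : (0:ℝ) ≤ ∑ t ∈ Finset.range m, (3/4:ℝ)^(t/2) := by positivity
    have e : (1/2:ℝ)^(N+1) = (1/2) * (1/2)^N := by rw [pow_succ]; ring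
    rw [e]
    have hc4 : (0:ℝ) ≤ (1/2:ℝ)^(k+4) := by positivity
    have t1 : (1/2) * (1/2:ℝ)^N * (1/2)^(k+4) * (∑ t ∈ Finset.range m, (3/4:ℝ)^(t/2))
        ≤ (1/2) * (1/2:ℝ)^N * (1/2)^(k+4) * 8 :=
      mul_le_mul_of_nonneg_left hsum (by positivity)
    have t2 : (1/2:ℝ)^N * (1/2)^(k+4) ≤ (1/2:ℝ)^N * (1/16) :=
      mul_le_mul_of_nonneg_left hsmall hNpos.le
    nlinarith [t1, t2]
  linarith

/-- for every `k` and `A ⊆ [0,k]` with `0 ∈ A`, the limit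
`σ(A;k) = lim_n σ_n(A;k)` exists and is positive. -/
theorem sigma_limit (k : ℕ) (A : Finset ℤ) (hA : A ⊆ Finset.Icc (0:ℤ) k) (h0 : (0:ℤ) ∈ A) :
    ∃ σ : ℝ, 0 < σ ∧ Filter.Tendsto (sigmaN A k) Filter.atTop (nhds σ) := by
  classical
  set n0 : ℕ := 2*(2*k+4) with hn0
  set g : ℕ → ℝ := fun m => sigmaN A k (m + n0) with hg
  have hanti : Antitone g := by
    apply antitone_nat_of_succ_le
    intro m
    have hmono := good_mono A k (m + n0) (by omega)
    have hmonoR : ((goodSet A k (m + n0 + 1)).card : ℝ) ≤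
        2 * ((goodSet A k (m+n0)).card : ℝ) := by exact_mod_cast hmono
    have e : m + 1 + n0 = (m + n0) + 1 := by omega
    show sigmaN A k (m + 1 + n0) ≤ sigmaN A k (m + n0)
    rw [e, sigmaN_eq, sigmaN_eq, pow_succ, div_le_div_iff₀ (by positivity) (by positivity)]
    nlinarith [mul_le_mul_of_nonneg_right hmonoR
      (le_of_lt (pow_pos (show (0:ℝ) < 2 by norm_num) (m+n0)))]
  have hbdd : BddBelow (Set.range g) := by
    refine ⟨0, ?_⟩
    rintro x ⟨m, rfl⟩
    show (0:ℝ) ≤ sigmaN A k (m + n0)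
    rw [sigmaN_eq]
    positivity
  have htend := tendsto_atTop_ciInf hanti hbdd
  refine ⟨⨅ m, g m, ?_, (Filter.tendsto_add_atTop_iff_nat n0).mp htend⟩
  have hlow : ∀ m, (3/4) * (1/2:ℝ)^(2*k+4) ≤ g m := by
    intro m
    have hb := beta_lb k A hA h0 m
    have hsub : blockGood A k (2*(2*k+4) + m) ⊆ goodSet A k (2*(2*k+4) + m) :=
      filter_subset _ _
    have hcard : ((blockGood A k (2*(2*k+4)+m)).card : ℝ) ≤
        ((goodSet A k (2*(2*k+4)+m)).card : ℝ) := by exact_mod_cast card_le_card hsub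
    show (3/4) * (1/2:ℝ)^(2*k+4) ≤ sigmaN A k (m + n0)
    have e : m + n0 = 2*(2*k+4) + m := by omega
    rw [e, sigmaN_eq]
    calc (3/4) * (1/2:ℝ)^(2*k+4)
        ≤ ((blockGood A k (2*(2*k+4)+m)).card : ℝ)/2^(2*(2*k+4)+m) := hb
      _ ≤ ((goodSet A k (2*(2*k+4)+m)).card : ℝ)/2^(2*(2*k+4)+m) := by gcongr
  calc (0:ℝ) < (3/4) * (1/2:ℝ)^(2*k+4) := by positivity
    _ ≤ ⨅ m, g m := le_ciInf hlow
end

section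
/- Let S be a uniformly random subset of [0,n] containing 0 and n (uniform among the 2^{n-1} such subsets, n ≥ 2). If s ∈ [1, n−1], then P(s ∉ S+S) = (1/2)·(3/4)^{(s−1)/2} if s is odd, and P(s ∉ S+S) = (1/4)·(3/4)^{(s−2)/2} if s is even; in particular P(s ∉ S+S) ≤ (1/2)·(3/4)^{(s−1)/2}. Moreover, if s ∈ [n+1, 2n−1], then P(s ∉ S+S) = P(2n−s ∉ S+S). -/
open Finset Filter Pointwise
open scoped Classical

noncomputable def cnt (a b t : ℤ) : ℕ :=
  ((Finset.Icc a b).powerset.filter (fun T => ∀ x ∈ T, ∀ y ∈ T, x + y ≠ t)).card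

lemma cnt_shift (a b t : ℤ) : cnt (a+1) (b+1) (t+2) = cnt a b t := by
  unfold cnt
  refine Finset.card_bij' (fun T _ => T.image (fun x => x - 1))
    (fun T _ => T.image (fun x => x + 1)) ?hi ?hj ?left ?right
  case hi =>
    intro T hT
    simp only [mem_filter, mem_powerset] at hT ⊢
    refine ⟨fun x hx => ?_, fun x hx y hy => ?_⟩
    · simp only [mem_image] at hx
      obtain ⟨z, hz, rfl⟩ := hx
      have := hT.1 hz
      simp only [mem_Icc] at this ⊢
      omega
    · simp only [mem_image] at hx hy
      obtain ⟨x', hx', rfl⟩ := hx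
      obtain ⟨y', hy', rfl⟩ := hy
      have := hT.2 x' hx' y' hy'
      omega
  case hj =>
    intro T hT
    simp only [mem_filter, mem_powerset] at hT ⊢
    refine ⟨fun x hx => ?_, fun x hx y hy => ?_⟩
    · simp only [mem_image] at hx
      obtain ⟨z, hz, rfl⟩ := hx
      have := hT.1 hz
      simp only [mem_Icc] at this ⊢
      omega
    · simp only [mem_image] at hx hy
      obtain ⟨x', hx', rfl⟩ := hx
      obtain ⟨y', hy', rfl⟩ := hy
      have := hT.2 x' hx' y' hy'
      omega
  case left =>
    intro T _
    show Finset.image (fun x => x + 1) (Finset.image (fun x => x - 1) T) = T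
    rw [Finset.image_image]
    have : ((fun x => x + 1) ∘ fun x : ℤ => x - 1) = id := by funext x; simp
    rw [this, Finset.image_id]
  case right =>
    intro T _
    show Finset.image (fun x => x - 1) (Finset.image (fun x => x + 1) T) = T
    rw [Finset.image_image]
    have : ((fun x => x - 1) ∘ fun x : ℤ => x + 1) = id := by funext x; simp
    rw [this, Finset.image_id]

lemma cnt_base1 : cnt 1 0 1 = 1 := by
  unfold cnt
  rw [show Finset.Icc (1:ℤ) 0 = ∅ by simp, Finset.powerset_empty]
  rw [Finset.filter_singleton]
  simp

lemma cnt_base2 : cnt 1 1 2 = 1 := by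
  unfold cnt
  rw [Finset.Icc_self]
  have : (({1} : Finset ℤ).powerset.filter (fun T => ∀ x ∈ T, ∀ y ∈ T, x + y ≠ 2)) = {∅} := by
    ext T
    simp only [mem_filter, mem_powerset, Finset.subset_singleton_iff, mem_singleton]
    constructor
    · rintro ⟨rfl | rfl, h⟩
      · rfl
      · exact absurd (h 1 (by simp) 1 (by simp)) (by norm_num)
    · rintro rfl
      simp
  have h2 := congrArg Finset.card this
  rw [Finset.card_singleton] at h2
  convert h2

lemma cnt_rec (s : ℤ) (hs : 3 ≤ s) :
    cnt 1 (s-1) s = 3 * cnt 1 (s-3) (s-2) := by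
  have hshift : cnt 1 (s-3) (s-2) = cnt 2 (s-2) s := by
    have h := cnt_shift 1 (s-3) (s-2)
    have e2 : s-3+1 = s-2 := by ring
    have e3 : s-2+2 = s := by ring
    rw [e2, e3] at h
    exact h.symm
  rw [hshift]
  unfold cnt
  set X := (Finset.Icc (1:ℤ) (s-1)).powerset.filter (fun T => ∀ x ∈ T, ∀ y ∈ T, x + y ≠ s) with hX
  set Y := (Finset.Icc (2:ℤ) (s-2)).powerset.filter (fun T => ∀ x ∈ T, ∀ y ∈ T, x + y ≠ s) with hY
  have hsplit1 := Finset.card_filter_add_card_filter_not (s := X) (p := fun T => (1:ℤ) ∈ T)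
  have hsplit2 := Finset.card_filter_add_card_filter_not
      (s := X.filter (fun T => ¬ (1:ℤ) ∈ T)) (p := fun T => s-1 ∈ T)
  have hc1 : (X.filter (fun T => (1:ℤ) ∈ T)).card = Y.card := by
    refine Finset.card_bij' (fun T _ => T.erase 1) (fun T _ => insert 1 T) ?_ ?_ ?_ ?_
    · intro T hT
      simp only [hX, hY, Finset.mem_filter, Finset.mem_powerset] at hT ⊢
      obtain ⟨⟨hsub, hp⟩, h1⟩ := hT
      have hs1 : s - 1 ∉ T := fun hmem => hp 1 h1 (s-1) hmem (by ring)
      refine ⟨fun x hx => ?_, fun x hx y hy =>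
        hp x (Finset.mem_of_mem_erase hx) y (Finset.mem_of_mem_erase hy)⟩
      have hxT := Finset.mem_of_mem_erase hx
      have hx1 := Finset.ne_of_mem_erase hx
      have hb := hsub hxT
      have hne : x ≠ s - 1 := fun h => hs1 (h ▸ hxT)
      simp only [Finset.mem_Icc] at hb ⊢
      omega
    · intro T hT
      simp only [hX, hY, Finset.mem_filter, Finset.mem_powerset] at hT ⊢
      obtain ⟨hsub, hp⟩ := hT
      refine ⟨⟨fun x hx => ?_, fun x hx y hy => ?_⟩, Finset.mem_insert_self _ _⟩
      · rcases Finset.mem_insert.1 hx with rfl | hx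
        · simp only [Finset.mem_Icc]; omega
        · have := hsub hx; simp only [Finset.mem_Icc] at this ⊢; omega
      · rcases Finset.mem_insert.1 hx with rfl | hx <;> rcases Finset.mem_insert.1 hy with rfl | hy
        · omega
        · have := hsub hy; simp only [Finset.mem_Icc] at this; omega
        · have := hsub hx; simp only [Finset.mem_Icc] at this; omega
        · exact hp x hx y hy
    · intro T hT
      simp only [hX, Finset.mem_filter, Finset.mem_powerset] at hT
      exact Finset.insert_erase hT.2
    · intro T hT
      simp only [hY, Finset.mem_filter, Finset.mem_powerset] at hT
      have h1T : (1:ℤ) ∉ T := fun h => by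
        have := hT.1 h; simp only [Finset.mem_Icc] at this; omega
      exact Finset.erase_insert h1T
  have hc2 : ((X.filter (fun T => ¬ (1:ℤ) ∈ T)).filter (fun T => s-1 ∈ T)).card = Y.card := by
    refine Finset.card_bij' (fun T _ => T.erase (s-1)) (fun T _ => insert (s-1) T) ?_ ?_ ?_ ?_
    · intro T hT
      simp only [hX, hY, Finset.mem_filter, Finset.mem_powerset] at hT ⊢
      obtain ⟨⟨⟨hsub, hp⟩, h1⟩, hsm⟩ := hT
      refine ⟨fun x hx => ?_, fun x hx y hy =>
        hp x (Finset.mem_of_mem_erase hx) y (Finset.mem_of_mem_erase hy)⟩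
      have hxT := Finset.mem_of_mem_erase hx
      have hxs := Finset.ne_of_mem_erase hx
      have hb := hsub hxT
      have hne : x ≠ 1 := fun h => h1 (h ▸ hxT)
      simp only [Finset.mem_Icc] at hb ⊢
      omega
    · intro T hT
      simp only [hX, hY, Finset.mem_filter, Finset.mem_powerset] at hT ⊢
      obtain ⟨hsub, hp⟩ := hT
      have h1T : (1:ℤ) ∉ T := fun h => by
        have := hsub h; simp only [Finset.mem_Icc] at this; omega
      refine ⟨⟨⟨fun x hx => ?_, fun x hx y hy => ?_⟩, ?_⟩, Finset.mem_insert_self _ _⟩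
      · rcases Finset.mem_insert.1 hx with rfl | hx
        · simp only [Finset.mem_Icc]; omega
        · have := hsub hx; simp only [Finset.mem_Icc] at this ⊢; omega
      · rcases Finset.mem_insert.1 hx with rfl | hx <;> rcases Finset.mem_insert.1 hy with rfl | hy
        · omega
        · have := hsub hy; simp only [Finset.mem_Icc] at this; omega
        · have := hsub hx; simp only [Finset.mem_Icc] at this; omega
        · exact hp x hx y hy
      · intro h
        rcases Finset.mem_insert.1 h with h | h
        · omega
        · exact h1T h
    · intro T hT
      simp only [hX, Finset.mem_filter, Finset.mem_powerset] at hT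
      exact Finset.insert_erase hT.2
    · intro T hT
      simp only [hY, Finset.mem_filter, Finset.mem_powerset] at hT
      have hsT : s - 1 ∉ T := fun h => by
        have := hT.1 h; simp only [Finset.mem_Icc] at this; omega
      exact Finset.erase_insert hsT
  have hc3 : ((X.filter (fun T => ¬ (1:ℤ) ∈ T)).filter (fun T => ¬ s-1 ∈ T)) = Y := by
    ext T
    simp only [hX, hY, Finset.mem_filter, Finset.mem_powerset]
    constructor
    · rintro ⟨⟨⟨hsub, hp⟩, h1⟩, hsm⟩
      refine ⟨fun x hx => ?_, hp⟩
      have hb := hsub hx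
      have hne1 : x ≠ 1 := fun h => h1 (h ▸ hx)
      have hnes : x ≠ s - 1 := fun h => hsm (h ▸ hx)
      simp only [Finset.mem_Icc] at hb ⊢
      omega
    · rintro ⟨hsub, hp⟩
      have hb : ∀ x ∈ T, 2 ≤ x ∧ x ≤ s - 2 := fun x hx => by
        have := hsub hx; simpa [Finset.mem_Icc] using this
      refine ⟨⟨⟨fun x hx => ?_, hp⟩, fun h => ?_⟩, fun h => ?_⟩
      · have := hb x hx; simp only [Finset.mem_Icc]; omega
      · have := hb 1 h; omega
      · have := hb (s-1) h; omega
  rw [hc1] at hsplit1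
  rw [hc2, hc3] at hsplit2
  omega

lemma cnt_closed (m : ℕ) :
    cnt 1 (2*(m:ℤ)) (2*(m:ℤ)+1) = 3^m ∧ cnt 1 (2*(m:ℤ)+1) (2*(m:ℤ)+2) = 3^m := by
  induction m with
  | zero =>
    refine ⟨?_, ?_⟩
    · simpa using cnt_base1
    · simpa using cnt_base2
  | succ k ih =>
    obtain ⟨ih1, ih2⟩ := ih
    have h1 := cnt_rec (2*(k:ℤ)+3) (by omega)
    have h2 := cnt_rec (2*(k:ℤ)+4) (by omega)
    rw [show (2*(k:ℤ)+3) - 1 = 2*(k:ℤ)+2 by ring, show (2*(k:ℤ)+3) - 3 = 2*(k:ℤ) by ring,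
        show (2*(k:ℤ)+3) - 2 = 2*(k:ℤ)+1 by ring, ih1] at h1
    rw [show (2*(k:ℤ)+4) - 1 = 2*(k:ℤ)+3 by ring, show (2*(k:ℤ)+4) - 3 = 2*(k:ℤ)+1 by ring,
        show (2*(k:ℤ)+4) - 2 = 2*(k:ℤ)+2 by ring, ih2] at h2
    constructor
    · rw [show 2*((k:ℕ)+1:ℕ) = (2*(k:ℤ)+2 : ℤ) by push_cast; ring]
      rw [show (2*(k:ℤ)+2) + 1 = 2*(k:ℤ)+3 by ring, h1]
      ring
    · rw [show 2*((k:ℕ)+1:ℕ) = (2*(k:ℤ)+2 : ℤ) by push_cast; ring]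
      rw [show (2*(k:ℤ)+2) + 1 = 2*(k:ℤ)+3 by ring]
      rw [show (2*(k:ℤ)+2) + 2 = 2*(k:ℤ)+4 by ring, h2]
      ring

lemma main_count (n s : ℕ) (hn : 2 ≤ n) (hs1 : 1 ≤ s) (hs2 : s ≤ n - 1) :
    ((Finset.Icc (0:ℤ) n).powerset.filter
      (fun S => (0:ℤ) ∈ S ∧ (n:ℤ) ∈ S ∧ (s:ℤ) ∉ S + S)).card
      = cnt 1 ((s:ℤ)-1) s * 2 ^ (n - 1 - s) := by
  have hsn : (s:ℤ) + 1 ≤ (n:ℤ) := by omega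
  set X := (Finset.Icc (1:ℤ) ((s:ℤ)-1)).powerset.filter
      (fun T => ∀ x ∈ T, ∀ y ∈ T, x + y ≠ (s:ℤ)) with hXdef
  set Pw := (Finset.Icc ((s:ℤ)+1) ((n:ℤ)-1)).powerset with hPdef
  have hcard : (X ×ˢ Pw).card = cnt 1 ((s:ℤ)-1) s * 2 ^ (n - 1 - s) := by
    rw [Finset.card_product, Finset.card_powerset, Int.card_Icc]
    congr 2
    omega
  rw [← hcard]
  refine Finset.card_bij'
    (fun S _ => (S ∩ Finset.Icc (1:ℤ) ((s:ℤ)-1), S ∩ Finset.Icc ((s:ℤ)+1) ((n:ℤ)-1)))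
    (fun p _ => insert 0 (insert (n:ℤ) (p.1 ∪ p.2))) ?hi ?hj ?left ?right
  case hi =>
    intro S hS
    simp only [Finset.mem_filter, Finset.mem_powerset] at hS
    obtain ⟨hsub, h0, hnn, hnot⟩ := hS
    refine Finset.mem_product.2 ⟨?_, ?_⟩
    · simp only [hXdef, Finset.mem_filter, Finset.mem_powerset]
      exact ⟨Finset.inter_subset_right, fun x hx y hy hxy =>
        hnot (Finset.mem_add.2 ⟨x, (Finset.mem_inter.1 hx).1, y, (Finset.mem_inter.1 hy).1, hxy⟩)⟩
    · exact Finset.mem_powerset.2 Finset.inter_subset_right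
  case hj =>
    rintro ⟨T, U⟩ hp
    rw [Finset.mem_product] at hp
    obtain ⟨hT, hU⟩ := hp
    simp only [hXdef, Finset.mem_filter, Finset.mem_powerset] at hT
    obtain ⟨hTsub, hTp⟩ := hT
    rw [hPdef, Finset.mem_powerset] at hU
    have hTb : ∀ x ∈ T, 1 ≤ x ∧ x ≤ (s:ℤ) - 1 := fun x hx => by
      have := hTsub hx; simpa [Finset.mem_Icc] using this
    have hUb : ∀ x ∈ U, (s:ℤ)+1 ≤ x ∧ x ≤ (n:ℤ)-1 := fun x hx => by
      have := hU hx; simpa [Finset.mem_Icc] using this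
    have claim : ∀ x ∈ insert (0:ℤ) (insert (n:ℤ) (T ∪ U)),
        (x = 0 ∨ x ∈ T ∨ (s:ℤ)+1 ≤ x) ∧ 0 ≤ x := by
      intro x hx
      rcases Finset.mem_insert.1 hx with rfl | hx
      · exact ⟨Or.inl rfl, le_refl 0⟩
      rcases Finset.mem_insert.1 hx with rfl | hx
      · exact ⟨Or.inr (Or.inr (by omega)), by omega⟩
      rcases Finset.mem_union.1 hx with hx | hx
      · exact ⟨Or.inr (Or.inl hx), by have := hTb x hx; omega⟩
      · exact ⟨Or.inr (Or.inr (hUb x hx).1), by have := hUb x hx; omega⟩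
    simp only [Finset.mem_filter, Finset.mem_powerset]
    refine ⟨?_, Finset.mem_insert_self _ _,
      Finset.mem_insert_of_mem (Finset.mem_insert_self _ _), ?_⟩
    · intro x hx
      have := (claim x hx).2
      have h2 := (claim x hx).1
      simp only [Finset.mem_Icc]
      rcases h2 with rfl | hxT | hge
      · omega
      · have := hTb x hxT; omega
      · rcases Finset.mem_insert.1 hx with rfl | hx
        · omega
        rcases Finset.mem_insert.1 hx with rfl | hx
        · omega
        rcases Finset.mem_union.1 hx with hx | hx
        · have := hTb x hx; omega
        · have := hUb x hx; omega
    · intro h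
      obtain ⟨a, ha, b, hb, hab⟩ := Finset.mem_add.1 h
      obtain ⟨ha1, ha0⟩ := claim a ha
      obtain ⟨hb1, hb0⟩ := claim b hb
      rcases ha1 with rfl | haT | ha2 <;> rcases hb1 with rfl | hbT | hb2
      · omega
      · have := hTb b hbT; omega
      · omega
      · have := hTb a haT; omega
      · exact hTp a haT b hbT hab
      · have := hTb a haT; omega
      · omega
      · have := hTb b hbT; omega
      · omega
  case left =>
    intro S hS
    simp only [Finset.mem_filter, Finset.mem_powerset] at hS
    obtain ⟨hsub, h0, hnn, hnot⟩ := hS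
    have hsS : (s:ℤ) ∉ S := fun h => hnot (Finset.mem_add.2 ⟨0, h0, (s:ℤ), h, zero_add _⟩)
    show insert 0 (insert (n:ℤ)
      ((S ∩ Finset.Icc (1:ℤ) ((s:ℤ)-1)) ∪ (S ∩ Finset.Icc ((s:ℤ)+1) ((n:ℤ)-1)))) = S
    ext x
    simp only [Finset.mem_insert, Finset.mem_union, Finset.mem_inter, Finset.mem_Icc]
    constructor
    · rintro (rfl | rfl | ⟨hx, _⟩ | ⟨hx, _⟩) <;> first | exact h0 | exact hnn | exact hx
    · intro hx
      have hb := hsub hx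
      simp only [Finset.mem_Icc] at hb
      have hxs : x ≠ (s:ℤ) := fun h => hsS (h ▸ hx)
      have harith : x = 0 ∨ x = (n:ℤ) ∨ (1 ≤ x ∧ x ≤ (s:ℤ)-1) ∨ ((s:ℤ)+1 ≤ x ∧ x ≤ (n:ℤ)-1) := by
        omega
      tauto
  case right =>
    rintro ⟨T, U⟩ hp
    rw [Finset.mem_product] at hp
    obtain ⟨hT, hU⟩ := hp
    simp only [hXdef, Finset.mem_filter, Finset.mem_powerset] at hT
    obtain ⟨hTsub, hTp⟩ := hT
    rw [hPdef, Finset.mem_powerset] at hU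
    have hTb : ∀ x ∈ T, 1 ≤ x ∧ x ≤ (s:ℤ) - 1 := fun x hx => by
      have := hTsub hx; simpa [Finset.mem_Icc] using this
    have hUb : ∀ x ∈ U, (s:ℤ)+1 ≤ x ∧ x ≤ (n:ℤ)-1 := fun x hx => by
      have := hU hx; simpa [Finset.mem_Icc] using this
    show (insert 0 (insert (n:ℤ) (T ∪ U)) ∩ Finset.Icc (1:ℤ) ((s:ℤ)-1),
          insert 0 (insert (n:ℤ) (T ∪ U)) ∩ Finset.Icc ((s:ℤ)+1) ((n:ℤ)-1)) = (T, U)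
    simp only [Prod.mk.injEq]
    constructor
    · ext x
      simp only [Finset.mem_inter, Finset.mem_insert, Finset.mem_union, Finset.mem_Icc]
      constructor
      · rintro ⟨rfl | rfl | hx | hx, hb1, hb2⟩
        · omega
        · omega
        · exact hx
        · have := hUb x hx; omega
      · intro hx
        exact ⟨Or.inr (Or.inr (Or.inl hx)), hTb x hx⟩
    · ext x
      simp only [Finset.mem_inter, Finset.mem_insert, Finset.mem_union, Finset.mem_Icc]
      constructor
      · rintro ⟨rfl | rfl | hx | hx, hb1, hb2⟩
        · omega
        · omega
        · have := hTb x hx; omega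
        · exact hx
      · intro hx
        exact ⟨Or.inr (Or.inr (Or.inr hx)), hUb x hx⟩

lemma mirror_mem (n : ℕ) (t : ℤ) (S : Finset ℤ)
    (h : S ∈ (Finset.Icc (0:ℤ) n).powerset.filter
      (fun S => (0:ℤ) ∈ S ∧ (n:ℤ) ∈ S ∧ t ∉ S + S)) :
    S.image (fun x => (n:ℤ) - x) ∈ (Finset.Icc (0:ℤ) n).powerset.filter
      (fun S => (0:ℤ) ∈ S ∧ (n:ℤ) ∈ S ∧ 2*(n:ℤ) - t ∉ S + S) := by
  simp only [Finset.mem_filter, Finset.mem_powerset] at h ⊢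
  obtain ⟨hsub, h0, hnn, hnot⟩ := h
  refine ⟨?_, ?_, ?_, ?_⟩
  · intro x hx
    simp only [Finset.mem_image] at hx
    obtain ⟨z, hz, rfl⟩ := hx
    have := hsub hz
    simp only [Finset.mem_Icc] at this ⊢
    omega
  · exact Finset.mem_image.2 ⟨(n:ℤ), hnn, by ring⟩
  · exact Finset.mem_image.2 ⟨0, h0, by ring⟩
  · intro h
    obtain ⟨a, ha, b, hb, hab⟩ := Finset.mem_add.1 h
    simp only [Finset.mem_image] at ha hb
    obtain ⟨a', ha', rfl⟩ := ha
    obtain ⟨b', hb', rfl⟩ := hb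
    exact hnot (Finset.mem_add.2 ⟨a', ha', b', hb', by omega⟩)

lemma mirror_card (n : ℕ) (t : ℤ) :
    ((Finset.Icc (0:ℤ) n).powerset.filter
      (fun S => (0:ℤ) ∈ S ∧ (n:ℤ) ∈ S ∧ t ∉ S + S)).card
    = ((Finset.Icc (0:ℤ) n).powerset.filter
      (fun S => (0:ℤ) ∈ S ∧ (n:ℤ) ∈ S ∧ 2*(n:ℤ) - t ∉ S + S)).card := by
  refine Finset.card_bij' (fun S _ => S.image (fun x => (n:ℤ) - x))
    (fun S _ => S.image (fun x => (n:ℤ) - x)) ?_ ?_ ?_ ?_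
  · exact fun S hS => mirror_mem n t S hS
  · intro S hS
    have := mirror_mem n (2*(n:ℤ)-t) S hS
    rwa [show 2*(n:ℤ) - (2*(n:ℤ)-t) = t by ring] at this
  · intro S _
    show Finset.image (fun x => (n:ℤ) - x) (Finset.image (fun x => (n:ℤ) - x) S) = S
    rw [Finset.image_image]
    have : ((fun x => (n:ℤ) - x) ∘ fun x => (n:ℤ) - x) = id := by funext x; simp
    rw [this, Finset.image_id]
  · intro S _
    show Finset.image (fun x => (n:ℤ) - x) (Finset.image (fun x => (n:ℤ) - x) S) = S
    rw [Finset.image_image]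
    have : ((fun x => (n:ℤ) - x) ∘ fun x => (n:ℤ) - x) = id := by funext x; simp
    rw [this, Finset.image_id]

lemma pr0n_eq (n : ℕ) (P : Finset ℤ → Prop) :
    pr0n n P = (((Finset.Icc (0:ℤ) n).powerset.filter
      (fun S => (0:ℤ) ∈ S ∧ (n:ℤ) ∈ S ∧ P S)).card : ℝ) / 2 ^ (n - 1) := rfl

/-- probability of a missing sum for a uniform random `S ⊆ [0,n]` with
`0, n ∈ S`. -/
theorem missing_sum_prob (n s : ℕ) (hn : 2 ≤ n) :
    (1 ≤ s → s ≤ n - 1 →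
      (Odd s → pr0n n (fun S => (s:ℤ) ∉ S + S) = (1/2) * (3/4 : ℝ) ^ ((s - 1) / 2)) ∧
      (Even s → pr0n n (fun S => (s:ℤ) ∉ S + S) = (1/4) * (3/4 : ℝ) ^ ((s - 2) / 2)) ∧
      pr0n n (fun S => (s:ℤ) ∉ S + S) ≤ (1/2) * (3/4 : ℝ) ^ (((s:ℝ) - 1) / 2)) ∧
    (n + 1 ≤ s → s ≤ 2 * n - 1 →
      pr0n n (fun S => (s:ℤ) ∉ S + S) = pr0n n (fun S => 2 * (n:ℤ) - s ∉ S + S)) := by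

  have hoddEq : 1 ≤ s → s ≤ n - 1 → Odd s →
      pr0n n (fun S => (s:ℤ) ∉ S + S) = (1/2) * (3/4 : ℝ) ^ ((s - 1) / 2) := by
    intro hs1 hs2 hodd
    obtain ⟨m, hm⟩ := hodd
    have hm' : s = 2*m+1 := by omega
    subst hm'
    have key : pr0n n (fun S => ((2*m+1 : ℕ):ℤ) ∉ S + S)
        = (cnt 1 (((2*m+1:ℕ):ℤ)-1) ((2*m+1:ℕ):ℤ) : ℝ) / 2 ^ (2*m+1) := by
      have hpr : pr0n n (fun S => ((2*m+1:ℕ):ℤ) ∉ S + S)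
          = (((Finset.Icc (0:ℤ) n).powerset.filter
            (fun S => (0:ℤ) ∈ S ∧ (n:ℤ) ∈ S ∧ ((2*m+1:ℕ):ℤ) ∉ S + S)).card : ℝ) / 2 ^ (n-1) := by
        unfold pr0n; congr!
      rw [hpr, main_count n (2*m+1) hn hs1 hs2]
      push_cast
      rw [div_eq_div_iff (by positivity) (by positivity), mul_assoc]
      rw [show (2:ℝ)^(n-1-(2*m+1)) * 2^(2*m+1) = 2^(n-1) by rw [← pow_add]; congr 1; omega]
    rw [key]
    have hc : cnt 1 (((2*m+1:ℕ):ℤ)-1) ((2*m+1:ℕ):ℤ) = 3^m := by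
      have h := (cnt_closed m).1
      convert h using 2 <;> push_cast <;> ring
    rw [hc, show (2*m+1-1)/2 = m by omega]
    push_cast
    rw [div_pow, show ((4:ℝ))^m = 2^(2*m) by rw [pow_mul]; norm_num, pow_succ]
    ring
  have hevenEq : 1 ≤ s → s ≤ n - 1 → Even s →
      pr0n n (fun S => (s:ℤ) ∉ S + S) = (1/4) * (3/4 : ℝ) ^ ((s - 2) / 2) := by
    intro hs1 hs2 heven
    obtain ⟨k, hk⟩ := heven
    obtain ⟨m, rfl⟩ : ∃ m, s = 2*m+2 := ⟨k-1, by omega⟩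
    have key : pr0n n (fun S => ((2*m+2 : ℕ):ℤ) ∉ S + S)
        = (cnt 1 (((2*m+2:ℕ):ℤ)-1) ((2*m+2:ℕ):ℤ) : ℝ) / 2 ^ (2*m+2) := by
      have hpr : pr0n n (fun S => ((2*m+2:ℕ):ℤ) ∉ S + S)
          = (((Finset.Icc (0:ℤ) n).powerset.filter
            (fun S => (0:ℤ) ∈ S ∧ (n:ℤ) ∈ S ∧ ((2*m+2:ℕ):ℤ) ∉ S + S)).card : ℝ) / 2 ^ (n-1) := by
        unfold pr0n; congr!
      rw [hpr, main_count n (2*m+2) hn hs1 hs2]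
      push_cast
      rw [div_eq_div_iff (by positivity) (by positivity), mul_assoc]
      rw [show (2:ℝ)^(n-1-(2*m+2)) * 2^(2*m+2) = 2^(n-1) by rw [← pow_add]; congr 1; omega]
    rw [key]
    have hc : cnt 1 (((2*m+2:ℕ):ℤ)-1) ((2*m+2:ℕ):ℤ) = 3^m := by
      have h := (cnt_closed m).2
      convert h using 2 <;> push_cast <;> ring
    rw [hc, show (2*m+2-2)/2 = m by omega]
    push_cast
    rw [div_pow, show ((4:ℝ))^m = 2^(2*m) by rw [pow_mul]; norm_num,
      show 2*m+2 = (2*m)+2 by ring, pow_add]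
    ring
  constructor
  · intro hs1 hs2
    refine ⟨hoddEq hs1 hs2, hevenEq hs1 hs2, ?_⟩
    rcases Nat.even_or_odd s with he | ho
    · rw [hevenEq hs1 hs2 he]
      obtain ⟨k, hk⟩ := he
      obtain ⟨m, rfl⟩ : ∃ m, s = 2*m+2 := ⟨k-1, by omega⟩
      rw [show (2*m+2-2)/2 = m by omega]
      rw [show (((2*m+2:ℕ):ℝ)-1)/2 = (m:ℝ) + 1/2 by push_cast; ring]
      rw [Real.rpow_add (by norm_num), Real.rpow_natCast, ← Real.sqrt_eq_rpow]
      have h1 := Real.sq_sqrt (show (0:ℝ) ≤ 3/4 by norm_num)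
      have h2 := Real.sqrt_nonneg (3/4:ℝ)
      have h3 : (0:ℝ) < (3/4:ℝ)^m := by positivity
      nlinarith [h1, h2, h3]
    · rw [hoddEq hs1 hs2 ho]
      obtain ⟨m, hm⟩ := ho
      have hm' : s = 2*m+1 := by omega
      subst hm'
      rw [show (2*m+1-1)/2 = m by omega]
      rw [show (((2*m+1:ℕ):ℝ)-1)/2 = (m:ℝ) by push_cast; ring]
      rw [Real.rpow_natCast]
  · intro _ _
    have h1 : pr0n n (fun S => (s:ℤ) ∉ S + S)
        = (((Finset.Icc (0:ℤ) n).powerset.filter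
          (fun S => (0:ℤ) ∈ S ∧ (n:ℤ) ∈ S ∧ ((s:ℕ):ℤ) ∉ S + S)).card : ℝ) / 2 ^ (n-1) := by
      unfold pr0n; congr!
    have h2 : pr0n n (fun S => 2 * (n:ℤ) - s ∉ S + S)
        = (((Finset.Icc (0:ℤ) n).powerset.filter
          (fun S => (0:ℤ) ∈ S ∧ (n:ℤ) ∈ S ∧ 2*(n:ℤ) - ((s:ℕ):ℤ) ∉ S + S)).card : ℝ) / 2 ^ (n-1) := by
      unfold pr0n; congr!
    rw [h1, h2, mirror_card n ((s:ℕ):ℤ)]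
end
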